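/- arXiv:1404.5064 — 8 statements merged into one kernel-verified Lean document; each statement's English description precedes it below -/
import Mathlib

section
/- For the fully-dropping AIMD matrix A_1 = diag(β) + α(e-β)^T there exists a constant c ∈ (0,1) such that ‖A_1 x‖_1 ≤ c‖x‖_1 for all x in the subspace V = {x ∈ ℝ^n : e^T x = 0}. -/
open Finset

/-- For the fully-dropping AIMD matrix `A₁ = diag(β) + α (e-β)ᵀ` there exists
`c ∈ (0,1)` such that `‖A₁ x‖₁ ≤ c ‖x‖₁` for all `x` with `eᵀ x = 0`. -/
theorem stmt2 (n : ℕ) (hn : 2 ≤ n) (α β : Fin n → ℝ)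
    (hα : ∀ i, 0 < α i) (hαs : ∑ i, α i = 1)
    (hβ : ∀ i, β i ∈ Set.Ioo (0 : ℝ) 1)
    (A : Matrix (Fin n) (Fin n) ℝ)
    (hA : ∀ i j, A i j = (if i = j then β i else 0) + α i * (1 - β j)) :
    ∃ c ∈ Set.Ioo (0 : ℝ) 1,
      ∀ x : Fin n → ℝ, ∑ i, x i = 0 → ∑ i, |A.mulVec x i| ≤ c * ∑ i, |x i| := by
  -- column sums are 1
  have hcol : ∀ j, ∑ i, A i j = 1 := by
    intro j
    calc ∑ i, A i j = ∑ i, ((if i = j then β i else 0) + α i * (1 - β j)) := by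
          simp only [hA]
      _ = (∑ i, if i = j then β i else 0) + (∑ i, α i) * (1 - β j) := by
          rw [Finset.sum_add_distrib, Finset.sum_mul]
      _ = β j + 1 * (1 - β j) := by rw [Finset.sum_ite_eq' univ j β, hαs]; simp
      _ = 1 := by ring
  -- entries are positive
  have hApos : ∀ i j, 0 < A i j := by
    intro i j
    rw [hA]
    rcases eq_or_ne i j with h | h
    · simp only [h, if_pos rfl]
      exact add_pos (hβ j).1 (mul_pos (hα j) (sub_pos.2 (hβ j).2))
    · simp only [if_neg h, zero_add]
      exact mul_pos (hα i) (sub_pos.2 (hβ j).2)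
  have hne : (univ ×ˢ univ : Finset (Fin n × Fin n)).Nonempty := by
    refine ⟨(⟨0, by omega⟩, ⟨0, by omega⟩), ?_⟩
    simp
  set m : ℝ := Finset.inf' (univ ×ˢ univ) hne (fun p => A p.1 p.2) with hm
  have hm_le : ∀ i j, m ≤ A i j := by
    intro i j
    exact Finset.inf'_le _ (by simp : (i, j) ∈ univ ×ˢ univ)
  have hm_pos : 0 < m := by
    rw [hm, Finset.lt_inf'_iff]
    exact fun p _ => hApos p.1 p.2
  have hnm : (n : ℝ) * m ≤ 1 := by
    have j0 : Fin n := ⟨0, by omega⟩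
    have : ∑ _i : Fin n, m ≤ ∑ i, A i j0 := Finset.sum_le_sum fun i _ => hm_le i j0
    simpa [hcol j0, Finset.sum_const, nsmul_eq_mul] using this
  refine ⟨1 - (n : ℝ) * (m / 2), ⟨by nlinarith, by
    have hn0 : (0 : ℝ) < n := by positivity
    nlinarith⟩, ?_⟩
  intro x hx
  have key : ∀ i, |A.mulVec x i| ≤ ∑ j, (A i j - m / 2) * |x j| := by
    intro i
    have h1 : A.mulVec x i = ∑ j, (A i j - m / 2) * x j := by
      simp only [Matrix.mulVec, dotProduct, sub_mul, Finset.sum_sub_distrib,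
        ← Finset.mul_sum, hx, mul_zero, sub_zero]
    rw [h1]
    calc |∑ j, (A i j - m / 2) * x j| ≤ ∑ j, |(A i j - m / 2) * x j| :=
          Finset.abs_sum_le_sum_abs _ _
      _ = ∑ j, (A i j - m / 2) * |x j| := by
          refine Finset.sum_congr rfl fun j _ => ?_
          rw [abs_mul, abs_of_nonneg (by linarith [hm_le i j, hm_pos])]
  calc ∑ i, |A.mulVec x i| ≤ ∑ i, ∑ j, (A i j - m / 2) * |x j| :=
        Finset.sum_le_sum fun i _ => key i
    _ = ∑ j, (∑ i, (A i j - m / 2)) * |x j| := by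
        rw [Finset.sum_comm]
        exact Finset.sum_congr rfl fun j _ => (Finset.sum_mul _ _ _).symm
    _ = ∑ j, (1 - (n : ℝ) * (m / 2)) * |x j| := by
        refine Finset.sum_congr rfl fun j _ => ?_
        rw [Finset.sum_sub_distrib, hcol j, Finset.sum_const, card_univ,
          Fintype.card_fin, nsmul_eq_mul]
    _ = (1 - (n : ℝ) * (m / 2)) * ∑ j, |x j| := by rw [← Finset.mul_sum]
end

section
/- For each block matrix A_T built from a column-stochastic matrix A whose induced 1-norm does not exceed 1 (with block structure: first block row A, and i-th block row (1/i)A in the first column and ((i-1)/i)I in column i-1, for i = 2,...,T), the operator norm of A_T induced by the norm ‖z‖_T = max_{i=1,...,T} ‖z_i‖_1 on ℝ^{Tn} is at most 1. -/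
open Finset

/-- The block matrix `A_T` built from a column-stochastic matrix `A` with induced
1-norm at most 1 (first block row `A`; `i`-th block row `(1/i)A` in the first
block column and `((i-1)/i)I` in block column `i-1`) has operator norm at most 1
with respect to the norm `‖z‖_T = max_i ‖z_i‖₁` on `ℝ^{Tn}`. -/
theorem stmt4 (n T : ℕ) (hn : 1 ≤ n) (hT : 0 < T)
    (A : Matrix (Fin n) (Fin n) ℝ)
    (hpos : ∀ i j, 0 ≤ A i j) (hcol : ∀ j, ∑ i, A i j = 1)
    (hnorm : ∀ x : Fin n → ℝ, ∑ i, |A.mulVec x i| ≤ ∑ i, |x i|) :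
    ∀ z : Fin T → Fin n → ℝ,
      (⨆ k : Fin T, ∑ j, |(1 / ((k : ℕ) + 1) : ℝ) * A.mulVec (z ⟨0, hT⟩) j +
          (((k : ℕ) : ℝ) / ((k : ℕ) + 1)) *
            z ⟨(k : ℕ) - 1, lt_of_le_of_lt (Nat.sub_le _ _) k.isLt⟩ j|) ≤
        ⨆ k : Fin T, ∑ j, |z k j| := by
  intro z
  haveI : Nonempty (Fin T) := ⟨⟨0, hT⟩⟩
  set M := ⨆ k : Fin T, ∑ j, |z k j| with hM
  have hle : ∀ i : Fin T, ∑ j, |z i j| ≤ M := fun i =>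
    le_ciSup (f := fun k : Fin T => ∑ j, |z k j|) (Set.Finite.bddAbove (Set.finite_range _)) i
  apply ciSup_le
  intro k
  have ha : (0:ℝ) ≤ 1 / ((k : ℕ) + 1) := by positivity
  have hb : (0:ℝ) ≤ ((k : ℕ) : ℝ) / ((k : ℕ) + 1) := by positivity
  calc ∑ j, |(1 / ((k : ℕ) + 1) : ℝ) * A.mulVec (z ⟨0, hT⟩) j +
          (((k : ℕ) : ℝ) / ((k : ℕ) + 1)) *
            z ⟨(k : ℕ) - 1, lt_of_le_of_lt (Nat.sub_le _ _) k.isLt⟩ j|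
      ≤ ∑ j, ((1 / ((k : ℕ) + 1) : ℝ) * |A.mulVec (z ⟨0, hT⟩) j| +
          (((k : ℕ) : ℝ) / ((k : ℕ) + 1)) *
            |z ⟨(k : ℕ) - 1, lt_of_le_of_lt (Nat.sub_le _ _) k.isLt⟩ j|) := by
        apply Finset.sum_le_sum
        intro j _
        calc _ ≤ |(1 / ((k : ℕ) + 1) : ℝ) * A.mulVec (z ⟨0, hT⟩) j| +
              |(((k : ℕ) : ℝ) / ((k : ℕ) + 1)) *
                z ⟨(k : ℕ) - 1, lt_of_le_of_lt (Nat.sub_le _ _) k.isLt⟩ j| := abs_add_le _ _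
          _ = _ := by rw [abs_mul, abs_mul, abs_of_nonneg ha, abs_of_nonneg hb]
    _ = (1 / ((k : ℕ) + 1) : ℝ) * ∑ j, |A.mulVec (z ⟨0, hT⟩) j| +
        (((k : ℕ) : ℝ) / ((k : ℕ) + 1)) *
          ∑ j, |z ⟨(k : ℕ) - 1, lt_of_le_of_lt (Nat.sub_le _ _) k.isLt⟩ j| := by
        rw [Finset.sum_add_distrib, Finset.mul_sum, Finset.mul_sum]
    _ ≤ (1 / ((k : ℕ) + 1) : ℝ) * M + (((k : ℕ) : ℝ) / ((k : ℕ) + 1)) * M := by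
        gcongr
        exact le_trans (hnorm _) (hle _)
        exact hle _
    _ = M := by field_simp; ring
end

section
/- Let A ∈ ℝ^{n×n} be column stochastic with ‖A‖_1 ≤ 1 and with the property that for x with e^T x = 0, ‖Ax‖_1 = ‖x‖_1 implies Ax = x. Let A_T be the associated block matrix. Then for all z in W = {z = (z_1,...,z_T) : e^T z_i = 0 for all i}, if ‖A_T z‖_T = ‖z‖_T then A z_1 = z_1. -/
open Finset

/-- Let `A` be column stochastic with `‖A‖₁ ≤ 1` and such that, for `x` with
`eᵀx = 0`, `‖Ax‖₁ = ‖x‖₁` implies `Ax = x`. If `z ∈ W` (all block components sum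
to zero) satisfies `‖A_T z‖_T = ‖z‖_T` for the associated block matrix `A_T`,
then `A z₁ = z₁`. -/
theorem stmt5 (n T : ℕ) (hn : 1 ≤ n) (hT : 0 < T)
    (A : Matrix (Fin n) (Fin n) ℝ)
    (hpos : ∀ i j, 0 ≤ A i j) (hcol : ∀ j, ∑ i, A i j = 1)
    (hnorm : ∀ x : Fin n → ℝ, ∑ i, |A.mulVec x i| ≤ ∑ i, |x i|)
    (hfix : ∀ x : Fin n → ℝ, ∑ i, x i = 0 →
      ∑ i, |A.mulVec x i| = ∑ i, |x i| → A.mulVec x = x) :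
    ∀ z : Fin T → Fin n → ℝ, (∀ i, ∑ j, z i j = 0) →
      (⨆ k : Fin T, ∑ j, |(1 / ((k : ℕ) + 1) : ℝ) * A.mulVec (z ⟨0, hT⟩) j +
          (((k : ℕ) : ℝ) / ((k : ℕ) + 1)) *
            z ⟨(k : ℕ) - 1, lt_of_le_of_lt (Nat.sub_le _ _) k.isLt⟩ j|) =
        (⨆ k : Fin T, ∑ j, |z k j|) →
      A.mulVec (z ⟨0, hT⟩) = z ⟨0, hT⟩ := by
  intro z hz h
  haveI : Nonempty (Fin T) := ⟨⟨0, hT⟩⟩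
  set z0 : Fin n → ℝ := z ⟨0, hT⟩ with hz0
  set u : Fin n → ℝ := A.mulVec z0 with hu
  set g : Fin T → ℝ := fun k => ∑ j, |z k j| with hg
  set f : Fin T → ℝ := fun k => ∑ j, |(1 / ((k : ℕ) + 1) : ℝ) * u j +
          (((k : ℕ) : ℝ) / ((k : ℕ) + 1)) *
            z ⟨(k : ℕ) - 1, lt_of_le_of_lt (Nat.sub_le _ _) k.isLt⟩ j| with hf
  have hh : (⨆ k, f k) = ⨆ k, g k := h
  set M : ℝ := ⨆ k, g k with hM
  obtain ⟨k, hk⟩ := Finite.exists_max f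
  have hbg : BddAbove (Set.range g) := (Set.finite_range g).bddAbove
  have hgle : ∀ i, g i ≤ M := fun i => le_ciSup hbg i
  have hfk : f k = M := by
    rw [← hh]
    exact le_antisymm (le_ciSup (Set.finite_range f).bddAbove k) (ciSup_le hk)
  set S : ℝ := ∑ j, |u j| with hS
  have hSz : S ≤ g ⟨0, hT⟩ := hnorm z0
  set a : ℝ := 1 / ((k : ℕ) + 1) with ha'
  set b : ℝ := ((k : ℕ) : ℝ) / ((k : ℕ) + 1) with hb'
  have hden : (0:ℝ) < (k : ℕ) + 1 := by positivity
  have ha : 0 < a := by positivity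
  have hb : 0 ≤ b := by positivity
  have hab : a + b = 1 := by rw [ha', hb']; field_simp; ring
  set v : Fin n → ℝ := z ⟨(k : ℕ) - 1, lt_of_le_of_lt (Nat.sub_le _ _) k.isLt⟩ with hv
  have hbound : f k ≤ a * S + b * (∑ j, |v j|) := by
    rw [hf, hS]
    simp only
    rw [Finset.mul_sum, Finset.mul_sum, ← Finset.sum_add_distrib]
    apply Finset.sum_le_sum
    intro j _
    calc |a * u j + b * v j| ≤ |a * u j| + |b * v j| := abs_add_le _ _
    _ = a * |u j| + b * |v j| := by
        rw [abs_mul, abs_mul, abs_of_pos ha, abs_of_nonneg hb]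
  have hvM : (∑ j, |v j|) ≤ M := hgle _
  have h1 : M ≤ a * S + b * M := by
    calc M = f k := hfk.symm
    _ ≤ a * S + b * (∑ j, |v j|) := hbound
    _ ≤ a * S + b * M := by nlinarith
  have h2 : a * M ≤ a * S := by
    have e : a * M = M - b * M := by rw [show a = 1 - b by linarith]; ring
    linarith
  have hMS : M ≤ S := le_of_mul_le_mul_left h2 ha
  have hg0 : g ⟨0, hT⟩ ≤ M := hgle _
  have heq : ∑ j, |A.mulVec z0 j| = ∑ j, |z0 j| := by
    have : S = g ⟨0, hT⟩ := le_antisymm hSz (by linarith)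
    simpa [hS, hg, hz0] using this
  exact hfix z0 (hz _) heq
end

section
/- If the matrix A_1 satisfies ‖A_1 x‖_1 ≤ c ‖x‖_1 for all x with e^T x = 0, where c ∈ (0,1), then the associated block matrix A_{T,1} restricted to W = {z : e^T z_i = 0 for all i} satisfies ‖A_{T,1} z‖_T ≤ ((c + T - 1)/T) ‖z‖_T for all z ∈ W, and (c+T-1)/T < 1. -/
open Finset

/-- If the column-stochastic matrix `A₁` satisfies `‖A₁x‖₁ ≤ c‖x‖₁` for all `x`
with `eᵀx = 0`, where `c ∈ (0,1)`, then the associated block matrix `A_{T,1}`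
restricted to `W = {z : eᵀzᵢ = 0 ∀ i}` satisfies
`‖A_{T,1} z‖_T ≤ ((c+T-1)/T) ‖z‖_T`, and `(c+T-1)/T < 1`. -/
theorem stmt6 (n T : ℕ) (hn : 1 ≤ n) (hT : 0 < T) (c : ℝ) (hc : c ∈ Set.Ioo (0 : ℝ) 1)
    (A : Matrix (Fin n) (Fin n) ℝ)
    (hpos : ∀ i j, 0 ≤ A i j) (hcol : ∀ j, ∑ i, A i j = 1)
    (hcontr : ∀ x : Fin n → ℝ, ∑ i, x i = 0 →
      ∑ i, |A.mulVec x i| ≤ c * ∑ i, |x i|) :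
    (c + (T : ℝ) - 1) / (T : ℝ) < 1 ∧
    ∀ z : Fin T → Fin n → ℝ, (∀ i, ∑ j, z i j = 0) →
      (⨆ k : Fin T, ∑ j, |(1 / ((k : ℕ) + 1) : ℝ) * A.mulVec (z ⟨0, hT⟩) j +
          (((k : ℕ) : ℝ) / ((k : ℕ) + 1)) *
            z ⟨(k : ℕ) - 1, lt_of_le_of_lt (Nat.sub_le _ _) k.isLt⟩ j|) ≤
        ((c + (T : ℝ) - 1) / (T : ℝ)) * ⨆ k : Fin T, ∑ j, |z k j| := by
  obtain ⟨hc0, hc1⟩ := hc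
  have hT' : (0:ℝ) < (T:ℝ) := by exact_mod_cast hT
  constructor
  · rw [div_lt_one hT']; linarith
  intro z hz
  haveI : Nonempty (Fin T) := ⟨⟨0, hT⟩⟩
  set M := ⨆ k : Fin T, ∑ j, |z k j| with hM
  have hMb : ∀ k : Fin T, ∑ j, |z k j| ≤ M := fun k =>
    le_ciSup (f := fun k : Fin T => ∑ j, |z k j|) (Set.Finite.bddAbove (Set.finite_range _)) k
  have hM0 : 0 ≤ M :=
    le_trans (Finset.sum_nonneg fun j _ => abs_nonneg _) (hMb ⟨0, hT⟩)
  apply ciSup_le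
  intro k
  have hk1 : (0:ℝ) < ((k:ℕ):ℝ) + 1 := by positivity
  have hkT : ((k:ℕ):ℝ) + 1 ≤ (T:ℝ) := by exact_mod_cast k.isLt
  have hzA : ∑ j, |A.mulVec (z ⟨0, hT⟩) j| ≤ c * M :=
    le_trans (hcontr _ (hz _))
      (mul_le_mul_of_nonneg_left (hMb _) (le_of_lt hc0))
  have step1 : ∑ j, |(1 / ((k : ℕ) + 1) : ℝ) * A.mulVec (z ⟨0, hT⟩) j +
          (((k : ℕ) : ℝ) / ((k : ℕ) + 1)) *
            z ⟨(k : ℕ) - 1, lt_of_le_of_lt (Nat.sub_le _ _) k.isLt⟩ j| ≤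
      (1 / (((k:ℕ):ℝ) + 1)) * ∑ j, |A.mulVec (z ⟨0, hT⟩) j| +
      (((k:ℕ):ℝ) / (((k:ℕ):ℝ) + 1)) *
        ∑ j, |z ⟨(k : ℕ) - 1, lt_of_le_of_lt (Nat.sub_le _ _) k.isLt⟩ j| := by
    rw [Finset.mul_sum, Finset.mul_sum, ← Finset.sum_add_distrib]
    apply Finset.sum_le_sum
    intro j _
    calc |(1 / ((k : ℕ) + 1) : ℝ) * A.mulVec (z ⟨0, hT⟩) j +
          (((k : ℕ) : ℝ) / ((k : ℕ) + 1)) * z _ j|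
        ≤ |(1 / ((k : ℕ) + 1) : ℝ) * A.mulVec (z ⟨0, hT⟩) j| +
          |(((k : ℕ) : ℝ) / ((k : ℕ) + 1)) * z _ j| := abs_add_le _ _
      _ = (1 / (((k:ℕ):ℝ) + 1)) * |A.mulVec (z ⟨0, hT⟩) j| +
          (((k:ℕ):ℝ) / (((k:ℕ):ℝ) + 1)) * |z _ j| := by
          rw [abs_mul, abs_mul, abs_of_nonneg (by positivity : (0:ℝ) ≤ 1 / (((k:ℕ):ℝ)+1)),
            abs_of_nonneg (by positivity : (0:ℝ) ≤ ((k:ℕ):ℝ) / (((k:ℕ):ℝ)+1))]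
  refine step1.trans ?_
  have step2 : (1 / (((k:ℕ):ℝ) + 1)) * ∑ j, |A.mulVec (z ⟨0, hT⟩) j| +
      (((k:ℕ):ℝ) / (((k:ℕ):ℝ) + 1)) *
        ∑ j, |z ⟨(k : ℕ) - 1, lt_of_le_of_lt (Nat.sub_le _ _) k.isLt⟩ j| ≤
      (1 / (((k:ℕ):ℝ) + 1)) * (c * M) + (((k:ℕ):ℝ) / (((k:ℕ):ℝ) + 1)) * M := by
    exact add_le_add (mul_le_mul_of_nonneg_left hzA (by positivity))
      (mul_le_mul_of_nonneg_left (hMb _) (by positivity))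
  refine step2.trans ?_
  have key : (1 / (((k:ℕ):ℝ) + 1)) * c + (((k:ℕ):ℝ) / (((k:ℕ):ℝ) + 1)) ≤
      (c + (T:ℝ) - 1) / (T:ℝ) := by
    rw [one_div_mul_eq_div, ← add_div, div_le_div_iff₀ hk1 hT']
    nlinarith [hkT, hc1.le]
  nlinarith [mul_le_mul_of_nonneg_right key hM0]
end

section
/- Under assumptions (A1)-(A3), the fixed point of P is unique, and a point x* ∈ Σ is a fixed point of P if and only if x*_i λ_i(x*_i) = x*_j λ_j(x*_j) for all i, j. -/
open Finset

/-- Under (A1)–(A3), a point `x ∈ Σ` is a fixed point of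
`P(x)ᵢ = λᵢ(xᵢ)⁻¹ / ∑_ℓ λ_ℓ(x_ℓ)⁻¹` if and only if
`xᵢ λᵢ(xᵢ) = x_j λ_j(x_j)` for all `i, j`; moreover the fixed point is unique. -/
theorem stmt8 (n : ℕ) (hn : 2 ≤ n) (lam : Fin n → ℝ → ℝ)
    (hmap : ∀ i, ∀ r ∈ Set.Icc (0 : ℝ) 1, lam i r ∈ Set.Icc (0 : ℝ) 1)
    (hcont : ∀ i, ContinuousOn (lam i) (Set.Icc 0 1))
    (hmono : ∀ i, StrictMonoOn (fun r => r * lam i r) (Set.Icc 0 1))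
    (lmin : ℝ) (hlmin : 0 < lmin)
    (hge : ∀ i, ∀ r ∈ Set.Icc (0 : ℝ) 1, lmin ≤ lam i r) :
    (∀ x : Fin n → ℝ, (∀ i, 0 ≤ x i) → ∑ i, x i = 1 →
      ((∀ i, (lam i (x i))⁻¹ / (∑ ℓ, (lam ℓ (x ℓ))⁻¹) = x i) ↔
        ∀ i j, x i * lam i (x i) = x j * lam j (x j))) ∧
    (∀ x y : Fin n → ℝ, (∀ i, 0 ≤ x i) → ∑ i, x i = 1 →
      (∀ i, 0 ≤ y i) → ∑ i, y i = 1 →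
      (∀ i, (lam i (x i))⁻¹ / (∑ ℓ, (lam ℓ (x ℓ))⁻¹) = x i) →
      (∀ i, (lam i (y i))⁻¹ / (∑ ℓ, (lam ℓ (y ℓ))⁻¹) = y i) →
      x = y) := by
  have hne : Nonempty (Fin n) := ⟨⟨0, by omega⟩⟩
  have hnice : ∀ x : Fin n → ℝ, (∀ i, 0 ≤ x i) → ∑ i, x i = 1 →
      ∀ i, x i ∈ Set.Icc (0:ℝ) 1 := by
    intro x hx hs i
    refine ⟨hx i, ?_⟩
    calc x i ≤ ∑ j, x j := Finset.single_le_sum (fun j _ => hx j) (Finset.mem_univ i)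
    _ = 1 := hs
  have hlpos : ∀ x : Fin n → ℝ, (∀ i, x i ∈ Set.Icc (0:ℝ) 1) →
      ∀ i, 0 < lam i (x i) := fun x hx i => lt_of_lt_of_le hlmin (hge i _ (hx i))
  have hSpos : ∀ x : Fin n → ℝ, (∀ i, x i ∈ Set.Icc (0:ℝ) 1) →
      0 < ∑ ℓ, (lam ℓ (x ℓ))⁻¹ := by
    intro x hx
    exact Finset.sum_pos (fun i _ => inv_pos.mpr (hlpos x hx i)) Finset.univ_nonempty
  have key : ∀ x : Fin n → ℝ, (∀ i, 0 ≤ x i) → ∑ i, x i = 1 →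
      ((∀ i, (lam i (x i))⁻¹ / (∑ ℓ, (lam ℓ (x ℓ))⁻¹) = x i) ↔
        ∀ i j, x i * lam i (x i) = x j * lam j (x j)) := by
    intro x hx hs
    have hic := hnice x hx hs
    have hl := hlpos x hic
    have hS := hSpos x hic
    constructor
    · intro h i j
      have key1 : ∀ k, x k * lam k (x k) * (∑ ℓ, (lam ℓ (x ℓ))⁻¹) = 1 := by
        intro k
        have hk := h k
        have h' : x k * (∑ ℓ, (lam ℓ (x ℓ))⁻¹) = (lam k (x k))⁻¹ := by
          conv_lhs => rw [← hk]
          exact div_mul_cancel₀ _ hS.ne'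
        calc x k * lam k (x k) * (∑ ℓ, (lam ℓ (x ℓ))⁻¹)
            = lam k (x k) * (x k * (∑ ℓ, (lam ℓ (x ℓ))⁻¹)) := by ring
          _ = lam k (x k) * (lam k (x k))⁻¹ := by rw [h']
          _ = 1 := mul_inv_cancel₀ (hl k).ne'
      exact mul_right_cancel₀ hS.ne' ((key1 i).trans (key1 j).symm)
    · intro h i
      set i0 : Fin n := ⟨0, by omega⟩ with hi0
      set c := x i0 * lam i0 (x i0) with hc
      have hcS : c * (∑ ℓ, (lam ℓ (x ℓ))⁻¹) = 1 := by
        rw [← hs, Finset.mul_sum]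
        apply Finset.sum_congr rfl
        intro j _
        have h0 : x j * lam j (x j) = c := h j i0
        rw [← h0]
        exact mul_inv_cancel_right₀ (hl j).ne' (x j)
      rw [div_eq_iff hS.ne']
      have h0 : x i * lam i (x i) = c := h i i0
      have key2 : (x i * (∑ ℓ, (lam ℓ (x ℓ))⁻¹)) * lam i (x i) = 1 := by
        calc (x i * (∑ ℓ, (lam ℓ (x ℓ))⁻¹)) * lam i (x i)
            = (x i * lam i (x i)) * (∑ ℓ, (lam ℓ (x ℓ))⁻¹) := by ring
          _ = c * (∑ ℓ, (lam ℓ (x ℓ))⁻¹) := by rw [h0]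
          _ = 1 := hcS
      have h1 : (lam i (x i))⁻¹ * lam i (x i) = (x i * (∑ ℓ, (lam ℓ (x ℓ))⁻¹)) * lam i (x i) := by
        rw [inv_mul_cancel₀ (hl i).ne', key2]
      exact mul_right_cancel₀ (hl i).ne' h1
  refine ⟨key, ?_⟩
  intro x y hx hsx hy hsy hfx hfy
  have hcx := (key x hx hsx).mp hfx
  have hcy := (key y hy hsy).mp hfy
  have hicx := hnice x hx hsx
  have hicy := hnice y hy hsy
  set i0 : Fin n := ⟨0, by omega⟩ with hi0
  have main : ∀ (u v : Fin n → ℝ), (∀ i, u i ∈ Set.Icc (0:ℝ) 1) →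
      (∀ i, v i ∈ Set.Icc (0:ℝ) 1) →
      (∀ i j, u i * lam i (u i) = u j * lam j (u j)) →
      (∀ i j, v i * lam i (v i) = v j * lam j (v j)) →
      u i0 * lam i0 (u i0) ≤ v i0 * lam i0 (v i0) →
      ∀ i, u i ≤ v i := by
    intro u v hu hv hcu hcv hle i
    by_contra hlt
    push_neg at hlt
    have hm := hmono i (hv i) (hu i) hlt
    simp only at hm
    have h1 := hcu i i0
    have h2 := hcv i i0
    linarith
  rcases le_total (x i0 * lam i0 (x i0)) (y i0 * lam i0 (y i0)) with hle | hle
  · have hxy := main x y hicx hicy hcx hcy hle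
    funext i
    by_contra hne'
    have hlt : x i < y i := lt_of_le_of_ne (hxy i) hne'
    have hsum : ∑ j, x j < ∑ j, y j :=
      Finset.sum_lt_sum (fun j _ => hxy j) ⟨i, Finset.mem_univ i, hlt⟩
    rw [hsx, hsy] at hsum; exact lt_irrefl _ hsum
  · have hxy := main y x hicy hicx hcy hcx hle
    funext i
    by_contra hne'
    have hlt : y i < x i := lt_of_le_of_ne (hxy i) (Ne.symm hne')
    have hsum : ∑ j, y j < ∑ j, x j :=
      Finset.sum_lt_sum (fun j _ => hxy j) ⟨i, Finset.mem_univ i, hlt⟩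
    rw [hsx, hsy] at hsum; exact lt_irrefl _ hsum
end

section
/- Under (A1)-(A3), for every η > 0 there exists ε_0 ∈ (0,1) such that for all 0 < ε < ε_0 and all x ∈ Σ with d_H(x, x*) > η (the Hilbert distance, possibly infinite if some x_i = 0), the map R_ε(x) = (1-ε)x + εP(x) satisfies d_H(R_ε(x), x*) < d_H(x, x*). -/
set_option maxHeartbeats 2000000

open Finset

/-- Extended Hilbert distance on the simplex: finite (the Hilbert projective
metric) when all entries of `x` are positive, and `⊤` otherwise. -/
noncomputable def dHE {n : ℕ} (x y : Fin n → ℝ) : EReal :=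
  if ∀ i, 0 < x i then
    (((⨆ i, Real.log (x i / y i)) - ⨅ j, Real.log (x j / y j) : ℝ) : EReal)
  else ⊤

private lemma iSup_eq_max {n : ℕ} [Nonempty (Fin n)] (f : Fin n → ℝ) (i₀ : Fin n)
    (h : ∀ i, f i ≤ f i₀) : (⨆ i, f i) = f i₀ :=
  le_antisymm (ciSup_le h) (le_ciSup (Set.finite_range f).bddAbove i₀)

private lemma iInf_eq_min {n : ℕ} [Nonempty (Fin n)] (f : Fin n → ℝ) (j₀ : Fin n)
    (h : ∀ i, f j₀ ≤ f i) : (⨅ i, f i) = f j₀ :=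
  le_antisymm (ciInf_le (Set.finite_range f).bddBelow j₀) (le_ciInf h)

private lemma dHE_lt_of_key {n : ℕ} (hn : 0 < n) (R x xs : Fin n → ℝ)
    (hR : ∀ i, 0 < R i) (hx : ∀ i, 0 < x i) (hxs : ∀ i, 0 < xs i)
    (i₀ j₀ : Fin n) (hi₀ : ∀ i, x i / xs i ≤ x i₀ / xs i₀)
    (hj₀ : ∀ i, x j₀ / xs j₀ ≤ x i / xs i)
    (key : ∀ i j, (x j₀ / xs j₀) * (R i / xs i) < (x i₀ / xs i₀) * (R j / xs j)) :
    dHE R xs < dHE x xs := by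
  have : Nonempty (Fin n) := ⟨⟨0, hn⟩⟩
  have hRd : ∀ i, 0 < R i / xs i := fun i => div_pos (hR i) (hxs i)
  have hxd : ∀ i, 0 < x i / xs i := fun i => div_pos (hx i) (hxs i)
  obtain ⟨i₁, hi₁⟩ := Finite.exists_max (fun i => R i / xs i)
  obtain ⟨j₁, hj₁⟩ := Finite.exists_min (fun i => R i / xs i)
  rw [dHE, if_pos hR, dHE, if_pos hx]
  rw [iSup_eq_max (fun i => Real.log (R i / xs i)) i₁
      (fun i => Real.log_le_log (hRd i) (hi₁ i)),
    iInf_eq_min (fun i => Real.log (R i / xs i)) j₁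
      (fun i => Real.log_le_log (hRd j₁) (hj₁ i)),
    iSup_eq_max (fun i => Real.log (x i / xs i)) i₀
      (fun i => Real.log_le_log (hxd i) (hi₀ i)),
    iInf_eq_min (fun i => Real.log (x i / xs i)) j₀
      (fun i => Real.log_le_log (hxd j₀) (hj₀ i))]
  rw [EReal.coe_lt_coe_iff]
  rw [← Real.log_div (ne_of_gt (hRd i₁)) (ne_of_gt (hRd j₁)),
    ← Real.log_div (ne_of_gt (hxd i₀)) (ne_of_gt (hxd j₀))]
  apply Real.log_lt_log (div_pos (hRd i₁) (hRd j₁))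
  rw [div_lt_div_iff₀ (hRd j₁) (hxd j₀)]
  have := key i₁ j₁
  nlinarith [this]

/-- Under (A1)–(A3), with `x*` the fixed point of `P`, for every `η > 0` there is
`ε₀ ∈ (0,1)` such that for `0 < ε < ε₀` and `x ∈ Σ` with `d_H(x,x*) > η`
(possibly infinite), the map `R_ε(x) = (1-ε)x + εP(x)` strictly decreases the
Hilbert distance to `x*`. -/
theorem stmt16 (n : ℕ) (hn : 2 ≤ n) (lam : Fin n → ℝ → ℝ)
    (hmap : ∀ i, ∀ r ∈ Set.Icc (0 : ℝ) 1, lam i r ∈ Set.Icc (0 : ℝ) 1)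
    (hcont : ∀ i, ContinuousOn (lam i) (Set.Icc 0 1))
    (hmono : ∀ i, StrictMonoOn (fun r => r * lam i r) (Set.Icc 0 1))
    (lmin : ℝ) (hlmin : 0 < lmin)
    (hge : ∀ i, ∀ r ∈ Set.Icc (0 : ℝ) 1, lmin ≤ lam i r)
    (xs : Fin n → ℝ) (hxspos : ∀ i, 0 < xs i) (hxssum : ∑ i, xs i = 1)
    (hfix : ∀ i, (lam i (xs i))⁻¹ / (∑ ℓ, (lam ℓ (xs ℓ))⁻¹) = xs i) :
    ∀ η : ℝ, 0 < η → ∃ ε₀ ∈ Set.Ioo (0 : ℝ) 1, ∀ ε : ℝ, 0 < ε → ε < ε₀ →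
      ∀ x : Fin n → ℝ, (∀ i, 0 ≤ x i) → ∑ i, x i = 1 →
        (η : EReal) < dHE x xs →
        dHE (fun i => (1 - ε) * x i +
            ε * ((lam i (x i))⁻¹ / (∑ ℓ, (lam ℓ (x ℓ))⁻¹))) xs
          < dHE x xs := by
  intro η hη
  have hn0 : 0 < n := by omega
  have hne : Nonempty (Fin n) := ⟨⟨0, hn0⟩⟩
  have hne' : (univ : Finset (Fin n)).Nonempty := univ_nonempty
  -- basic facts about xs
  have hxs1 : ∀ i, xs i ≤ 1 := by
    intro i
    calc xs i ≤ ∑ j, xs j :=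
          Finset.single_le_sum (fun j _ => (hxspos j).le) (mem_univ i)
      _ = 1 := hxssum
  have hxsIcc : ∀ i, xs i ∈ Set.Icc (0:ℝ) 1 := fun i => ⟨(hxspos i).le, hxs1 i⟩
  have hssb : ∀ i, lmin ≤ lam i (xs i) ∧ lam i (xs i) ≤ 1 :=
    fun i => ⟨hge i _ (hxsIcc i), (hmap i _ (hxsIcc i)).2⟩
  have hsspos : ∀ i, 0 < lam i (xs i) := fun i => lt_of_lt_of_le hlmin (hssb i).1
  have hl1 : lmin ≤ 1 := le_trans (hssb ⟨0, hn0⟩).1 (hssb ⟨0, hn0⟩).2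
  -- the exponential margins
  set θ : ℝ := (Real.exp (η/2) - 1)/2 with hθdef
  have hθ : 0 < θ := by
    have : (1:ℝ) < Real.exp (η/2) := Real.one_lt_exp_iff.mpr (by linarith)
    simp only [hθdef]; linarith
  have hexpθ : Real.exp (η/2) = 1 + 2*θ := by simp only [hθdef]; ring
  set θ' : ℝ := (1 - Real.exp (-(η/2)))/2 with hθ'def
  have hθ' : 0 < θ' := by
    have : Real.exp (-(η/2)) < 1 := Real.exp_lt_one_iff.mpr (by linarith)
    simp only [hθ'def]; linarith
  have hθ'half : θ' < 1/2 := by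
    have : 0 < Real.exp (-(η/2)) := Real.exp_pos _
    simp only [hθ'def]; linarith
  have hexpθ' : Real.exp (-(η/2)) = 1 - 2*θ' := by simp only [hθ'def]; ring
  -- gap constants from strict monotonicity
  set g : ℝ := univ.inf' hne' (fun i => if (1+θ)*xs i ≤ 1 then
      ((1+θ)*xs i)*(lam i ((1+θ)*xs i)) - xs i * lam i (xs i) else 1) with hgdef
  have hgpos : 0 < g := by
    rw [hgdef, Finset.lt_inf'_iff]
    intro i _
    by_cases h1 : (1+θ)*xs i ≤ 1
    · rw [if_pos h1]
      have hlt : xs i < (1+θ)*xs i := by nlinarith [hxspos i]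
      have := hmono i (hxsIcc i) ⟨by nlinarith [hxspos i], h1⟩ hlt
      simpa using sub_pos.mpr this
    · rw [if_neg h1]; norm_num
  have hgap : ∀ i, ∀ u ∈ Set.Icc (0:ℝ) 1, (1+θ)*xs i ≤ u →
      xs i * lam i (xs i) + g ≤ u * lam i u := by
    intro i u hu hle
    have h1 : (1+θ)*xs i ≤ 1 := le_trans hle hu.2
    have h2 : g ≤ ((1+θ)*xs i)*(lam i ((1+θ)*xs i)) - xs i * lam i (xs i) := by
      have := Finset.inf'_le (b := i) (fun i => if (1+θ)*xs i ≤ 1 then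
        ((1+θ)*xs i)*(lam i ((1+θ)*xs i)) - xs i * lam i (xs i) else 1) (mem_univ i)
      rw [if_pos h1] at this
      rw [hgdef]; exact this
    have h3 : ((1+θ)*xs i)*(lam i ((1+θ)*xs i)) ≤ u * lam i u :=
      (hmono i).monotoneOn ⟨by nlinarith [hxspos i], h1⟩ hu hle
    linarith
  set g' : ℝ := min (univ.inf' hne' (fun i =>
      xs i * lam i (xs i) - ((1-θ')*xs i)*(lam i ((1-θ')*xs i)))) 2⁻¹ with hg'def
  have hθ'xs : ∀ i, (1-θ')*xs i ∈ Set.Icc (0:ℝ) 1 := by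
    intro i
    constructor
    · exact mul_nonneg (by linarith) (hxspos i).le
    · nlinarith [hxspos i, hxs1 i]
  have hg'pos : 0 < g' := by
    rw [hg'def]
    apply lt_min _ (by norm_num)
    rw [Finset.lt_inf'_iff]
    intro i _
    have hlt : (1-θ')*xs i < xs i := by nlinarith [hxspos i]
    have := hmono i (hθ'xs i) (hxsIcc i) hlt
    simpa using sub_pos.mpr this
  have hg'half : g' ≤ 2⁻¹ := by rw [hg'def]; exact min_le_right _ _
  have hgap' : ∀ i, ∀ u ∈ Set.Icc (0:ℝ) 1, u ≤ (1-θ')*xs i →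
      u * lam i u ≤ xs i * lam i (xs i) - g' := by
    intro i u hu hle
    have h2 : g' ≤ xs i * lam i (xs i) - ((1-θ')*xs i)*(lam i ((1-θ')*xs i)) := by
      rw [hg'def]
      exact le_trans (min_le_left _ _) (Finset.inf'_le _ (mem_univ i))
    have h3 : u * lam i u ≤ ((1-θ')*xs i)*(lam i ((1-θ')*xs i)) :=
      (hmono i).monotoneOn hu (hθ'xs i) hle
    linarith
  -- modulus of continuity
  set ω : ℝ := min (lmin*g/(2*(1+g))) (lmin*g'/2) with hωdef
  have hωpos : 0 < ω := by
    rw [hωdef]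
    apply lt_min <;> positivity
  have hωg : ω ≤ lmin*g/(2*(1+g)) := by rw [hωdef]; exact min_le_left _ _
  have hωg' : ω ≤ lmin*g'/2 := by rw [hωdef]; exact min_le_right _ _
  have hωg2 : ω * (2*(1+g)) ≤ lmin*g := by
    rw [← le_div_iff₀ (by nlinarith [hgpos] : (0:ℝ) < 2*(1+g))]
    exact hωg
  have hωg'2 : ω * 2 ≤ lmin*g' := by
    rw [← le_div_iff₀ (by norm_num : (0:ℝ) < 2)]
    exact hωg'
  have hUC : ∀ i, ∃ δ > 0, ∀ u ∈ Set.Icc (0:ℝ) 1, ∀ v ∈ Set.Icc (0:ℝ) 1,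
      |u - v| < δ → |lam i u - lam i v| < ω := by
    intro i
    have h := isCompact_Icc.uniformContinuousOn_of_continuous (hcont i)
    rw [Metric.uniformContinuousOn_iff] at h
    obtain ⟨δ, hδ, H⟩ := h ω hωpos
    exact ⟨δ, hδ, fun u hu v hv hd => by
      have := H u hu v hv (by simpa [Real.dist_eq] using hd)
      simpa [Real.dist_eq] using this⟩
  choose δ hδpos hδ using hUC
  set τ₁ : ℝ := univ.inf' hne' δ with hτ₁def
  have hτ₁pos : 0 < τ₁ := by
    rw [hτ₁def, Finset.lt_inf'_iff]; exact fun i _ => hδpos i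
  set τ : ℝ := min (min (τ₁/2) θ) θ' with hτdef
  have hτpos : 0 < τ := by
    rw [hτdef]; apply lt_min (lt_min (by linarith) hθ) hθ'
  have hτδ : ∀ i, τ < δ i := by
    intro i
    calc τ ≤ τ₁/2 := le_trans (by rw [hτdef]; exact min_le_left _ _) (min_le_left _ _)
      _ < τ₁ := by linarith
      _ ≤ δ i := Finset.inf'_le _ (mem_univ i)
  have hτθ : τ ≤ θ := le_trans (by rw [hτdef]; exact min_le_left _ _) (min_le_right _ _)
  have hτθ' : τ ≤ θ' := by rw [hτdef]; exact min_le_right _ _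
  -- choice of ε₀
  refine ⟨min (lmin^4*τ/(2*(lmin^2)⁻¹)) 2⁻¹, ⟨lt_min (by positivity) (by norm_num),
    lt_of_le_of_lt (min_le_right _ _) (by norm_num)⟩, ?_⟩
  intro ε hε hεε₀ x hx0 hxsum hdist
  have hε2 : ε ≤ 2⁻¹ := le_of_lt (lt_of_lt_of_le hεε₀ (min_le_right _ _))
  have hε1 : ε < 1 := by linarith
  have hεA : ε * (lmin^2)⁻¹ < lmin^4*τ/2 := by
    have h1 : ε < lmin^4*τ/(2*(lmin^2)⁻¹) := lt_of_lt_of_le hεε₀ (min_le_left _ _)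
    have hA : (0:ℝ) < (lmin^2)⁻¹ := by positivity
    calc ε * (lmin^2)⁻¹ < (lmin^4*τ/(2*(lmin^2)⁻¹)) * (lmin^2)⁻¹ :=
          mul_lt_mul_of_pos_right h1 hA
      _ = lmin^4*τ/2 := by field_simp
  -- facts about x
  have hx1 : ∀ i, x i ≤ 1 := by
    intro i
    calc x i ≤ ∑ j, x j := Finset.single_le_sum (fun j _ => hx0 j) (mem_univ i)
      _ = 1 := hxsum
  have hxIcc : ∀ i, x i ∈ Set.Icc (0:ℝ) 1 := fun i => ⟨hx0 i, hx1 i⟩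
  have hsb : ∀ i, lmin ≤ lam i (x i) ∧ lam i (x i) ≤ 1 :=
    fun i => ⟨hge i _ (hxIcc i), (hmap i _ (hxIcc i)).2⟩
  have hspos : ∀ i, 0 < lam i (x i) := fun i => lt_of_lt_of_le hlmin (hsb i).1
  set S : ℝ := ∑ ℓ, (lam ℓ (x ℓ))⁻¹ with hSdef
  set S' : ℝ := ∑ ℓ, (lam ℓ (xs ℓ))⁻¹ with hS'def
  have hSpos : 0 < S := by
    rw [hSdef]; exact Finset.sum_pos (fun i _ => inv_pos.mpr (hspos i)) hne'
  have hS'pos : 0 < S' := by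
    rw [hS'def]; exact Finset.sum_pos (fun i _ => inv_pos.mpr (hsspos i)) hne'
  set R : Fin n → ℝ := fun i => (1-ε)*x i + ε*((lam i (x i))⁻¹ / S) with hRdef
  have hRpos : ∀ i, 0 < R i := by
    intro i
    have : 0 < (lam i (x i))⁻¹ / S := div_pos (inv_pos.mpr (hspos i)) hSpos
    have h2 : 0 ≤ (1-ε) * x i := mul_nonneg (by linarith) (hx0 i)
    rw [hRdef]
    dsimp only
    linarith only [this, h2, mul_lt_mul_of_pos_left this hε]
  by_cases hxpos : ∀ i, 0 < x i
  case neg =>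
    rw [dHE, if_pos hRpos, dHE, if_neg hxpos]
    exact EReal.coe_lt_top _
  case pos =>
    obtain ⟨i₀, hi₀⟩ := Finite.exists_max (fun i => x i / xs i)
    obtain ⟨j₀, hj₀⟩ := Finite.exists_min (fun i => x i / xs i)
    have hi₀' : ∀ i, x i / xs i ≤ x i₀ / xs i₀ := hi₀
    have hj₀' : ∀ i, x j₀ / xs j₀ ≤ x i / xs i := hj₀
    have hρpos : ∀ i, 0 < x i / xs i := fun i => div_pos (hxpos i) (hxspos i)
    have hm0 : 0 < x j₀ / xs j₀ := hρpos j₀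
    have hM0 : 0 < x i₀ / xs i₀ := hρpos i₀
    have hM1 : 1 ≤ x i₀ / xs i₀ := by
      by_contra h
      push_neg at h
      have hall : ∀ i, x i < xs i := by
        intro i
        have h2 := lt_of_le_of_lt (hi₀' i) h
        rwa [div_lt_one (hxspos i)] at h2
      have := Finset.sum_lt_sum_of_nonempty hne' (fun i _ => hall i)
      rw [hxsum, hxssum] at this
      exact lt_irrefl _ this
    have hm1 : x j₀ / xs j₀ ≤ 1 := by
      by_contra h
      push_neg at h
      have hall : ∀ i, xs i < x i := by
        intro i
        have h2 := lt_of_lt_of_le h (hj₀' i)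
        rwa [lt_div_iff₀ (hxspos i), one_mul] at h2
      have := Finset.sum_lt_sum_of_nonempty hne' (fun i _ => hall i)
      rw [hxsum, hxssum] at this
      exact lt_irrefl _ this
    have hMm : Real.exp η < (x i₀ / xs i₀) / (x j₀ / xs j₀) := by
      rw [dHE, if_pos hxpos,
        iSup_eq_max (fun i => Real.log (x i / xs i)) i₀
          (fun i => Real.log_le_log (hρpos i) (hi₀' i)),
        iInf_eq_min (fun i => Real.log (x i / xs i)) j₀
          (fun i => Real.log_le_log (hρpos j₀) (hj₀' i)),
        EReal.coe_lt_coe_iff,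
        ← Real.log_div (ne_of_gt hM0) (ne_of_gt hm0)] at hdist
      exact (Real.lt_log_iff_exp_lt (div_pos hM0 hm0)).1 hdist
    set M := x i₀ / xs i₀ with hMdef
    set m := x j₀ / xs j₀ with hmdef
    -- the normalized update ratios
    set q : Fin n → ℝ := fun k => (lam k (xs k) / lam k (x k)) * (S' / S) with hqdef
    have hq0 : ∀ k, 0 < q k := fun k =>
      mul_pos (div_pos (hsspos k) (hspos k)) (div_pos hS'pos hSpos)
    have hσub : ∀ k, lam k (xs k) / lam k (x k) ≤ lmin⁻¹ := by
      intro k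
      rw [inv_eq_one_div, div_le_div_iff₀ (hspos k) hlmin]
      have a1 : lam k (xs k) * lmin ≤ 1 * lmin :=
        mul_le_mul_of_nonneg_right (hssb k).2 hlmin.le
      linarith only [a1, (hsb k).1]
    have hσlb : ∀ k, lmin ≤ lam k (xs k) / lam k (x k) := by
      intro k
      rw [le_div_iff₀ (hspos k)]
      have a1 : lmin * lam k (x k) ≤ lmin * 1 :=
        mul_le_mul_of_nonneg_left (hsb k).2 hlmin.le
      linarith only [a1, (hssb k).1]
    have hSub : S ≤ n * lmin⁻¹ := by
      rw [hSdef]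
      calc ∑ ℓ, (lam ℓ (x ℓ))⁻¹ ≤ ∑ _ℓ : Fin n, lmin⁻¹ :=
            Finset.sum_le_sum (fun ℓ _ => inv_anti₀ hlmin (hsb ℓ).1)
        _ = n * lmin⁻¹ := by rw [Finset.sum_const, card_univ, Fintype.card_fin,
              nsmul_eq_mul]
    have hSlb : (n:ℝ) ≤ S := by
      rw [hSdef]
      calc (n:ℝ) = ∑ _ℓ : Fin n, (1:ℝ) := by
            rw [Finset.sum_const, card_univ, Fintype.card_fin, nsmul_eq_mul, mul_one]
        _ ≤ ∑ ℓ, (lam ℓ (x ℓ))⁻¹ :=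
            Finset.sum_le_sum (fun ℓ _ => one_le_inv_iff₀.mpr ⟨hspos ℓ, (hsb ℓ).2⟩)
    have hS'ub : S' ≤ n * lmin⁻¹ := by
      rw [hS'def]
      calc ∑ ℓ, (lam ℓ (xs ℓ))⁻¹ ≤ ∑ _ℓ : Fin n, lmin⁻¹ :=
            Finset.sum_le_sum (fun ℓ _ => inv_anti₀ hlmin (hssb ℓ).1)
        _ = n * lmin⁻¹ := by rw [Finset.sum_const, card_univ, Fintype.card_fin,
              nsmul_eq_mul]
    have hS'lb : (n:ℝ) ≤ S' := by
      rw [hS'def]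
      calc (n:ℝ) = ∑ _ℓ : Fin n, (1:ℝ) := by
            rw [Finset.sum_const, card_univ, Fintype.card_fin, nsmul_eq_mul, mul_one]
        _ ≤ ∑ ℓ, (lam ℓ (xs ℓ))⁻¹ :=
            Finset.sum_le_sum (fun ℓ _ => one_le_inv_iff₀.mpr ⟨hsspos ℓ, (hssb ℓ).2⟩)
    have hnpos : (0:ℝ) < n := by exact_mod_cast hn0
    have hS'Sub : S'/S ≤ lmin⁻¹ := by
      rw [div_le_iff₀ hSpos]
      have h1 : (n:ℝ) * lmin⁻¹ ≤ lmin⁻¹ * S := by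
        rw [mul_comm]
        exact mul_le_mul_of_nonneg_left hSlb (by positivity)
      linarith [hS'ub]
    have hS'Slb : lmin ≤ S'/S := by
      rw [le_div_iff₀ hSpos]
      calc lmin * S ≤ lmin * (n * lmin⁻¹) := mul_le_mul_of_nonneg_left hSub hlmin.le
        _ = n := by field_simp
        _ ≤ S' := hS'lb
    have hqub : ∀ k, q k ≤ (lmin^2)⁻¹ := by
      intro k
      have h1 : q k ≤ lmin⁻¹ * lmin⁻¹ := by
        rw [hqdef]
        exact mul_le_mul (hσub k) (hS'Sub) (div_pos hS'pos hSpos).le (by positivity)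
      calc q k ≤ lmin⁻¹ * lmin⁻¹ := h1
        _ = (lmin^2)⁻¹ := by rw [pow_two, mul_inv]
    have hqlb : ∀ k, lmin^2 ≤ q k := by
      intro k
      have h1 : lmin * lmin ≤ q k := by
        rw [hqdef]
        exact mul_le_mul (hσlb k) (hS'Slb) hlmin.le
          (le_trans hlmin.le (hσlb k))
      calc lmin^2 = lmin * lmin := pow_two lmin
        _ ≤ q k := h1
    -- expressing the update ratio
    have hq' : ∀ k, q k * xs k = (lam k (x k))⁻¹ / S := by
      intro k
      have hone : xs k * S' * lam k (xs k) = 1 := by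
        have h := hfix k
        have h1 : lam k (xs k) ≠ 0 := (hsspos k).ne'
        have h2 : S' ≠ 0 := hS'pos.ne'
        field_simp at h
        linarith only [h]
      calc q k * xs k = (lam k (xs k) * S' * xs k) / (lam k (x k) * S) := by
            simp only [hqdef]; ring
        _ = 1 / (lam k (x k) * S) := by rw [show lam k (xs k) * S' * xs k = 1 by
            linarith only [hone]]
        _ = (lam k (x k))⁻¹ / S := by
            rw [div_eq_mul_inv, div_eq_mul_inv, one_mul, mul_inv]
    have hRdiv : ∀ k, R k / xs k = (1-ε)*(x k / xs k) + ε * q k := by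
      intro k
      rw [hRdef]
      dsimp only
      rw [← hq' k]
      field_simp [(hxspos k).ne']
    -- monotonicity transfer
    have hup : ∀ k, xs k ≤ x k → lam k (xs k)/lam k (x k) ≤ x k / xs k := by
      intro k hk
      have h1 : xs k * lam k (xs k) ≤ x k * lam k (x k) :=
        (hmono k).monotoneOn (hxsIcc k) (hxIcc k) hk
      rw [div_le_div_iff₀ (hspos k) (hxspos k)]
      linarith only [h1]
    have hdown : ∀ k, x k ≤ xs k → x k / xs k ≤ lam k (xs k)/lam k (x k) := by
      intro k hk
      have h1 : x k * lam k (x k) ≤ xs k * lam k (xs k) :=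
        (hmono k).monotoneOn (hxIcc k) (hxsIcc k) hk
      rw [div_le_div_iff₀ (hxspos k) (hspos k)]
      linarith only [h1]
    -- the key pairwise inequality
    have key : ∀ i j, m * (R i / xs i) < M * (R j / xs j) := by
      intro i j
      rw [hRdiv i, hRdiv j]
      have hρiM : x i / xs i ≤ M := hi₀' i
      have hρjm : m ≤ x j / xs j := hj₀' j
      have h1 : m * (x i / xs i) ≤ M * (x j / xs j) := by
        have a1 := mul_le_mul_of_nonneg_left hρiM hm0.le
        have a2 := mul_le_mul_of_nonneg_left hρjm hM0.le
        linarith only [a1, a2]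
      have combine : m * q i < M * q j →
          m * ((1-ε)*(x i/xs i) + ε*q i) < M * ((1-ε)*(x j/xs j) + ε*q j) := by
        intro h2
        have a1 := mul_le_mul_of_nonneg_left h1 (by linarith : (0:ℝ) ≤ 1-ε)
        have a2 := mul_lt_mul_of_pos_left h2 hε
        nlinarith only [a1, a2]
      by_cases hcase : m < lmin^4
      · -- tiny minimum: works for every ε
        apply combine
        have h3 : m * q i ≤ m * (lmin^2)⁻¹ := mul_le_mul_of_nonneg_left (hqub i) hm0.le
        have h4 : m * (lmin^2)⁻¹ < lmin^2 := by
          calc m * (lmin^2)⁻¹ < lmin^4 * (lmin^2)⁻¹ :=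
                mul_lt_mul_of_pos_right hcase (by positivity)
            _ = lmin^2 := by field_simp
        have h5 : lmin^2 ≤ M * q j := by
          have a1 : 1 * q j ≤ M * q j := mul_le_mul_of_nonneg_right hM1 (hq0 j).le
          have a2 := hqlb j
          linarith only [a1, a2]
        linarith only [h3, h4, h5]
      · push_neg at hcase
        by_cases hnear : M - τ < x i / xs i ∧ x j / xs j < m + τ
        · -- near-extremal pair
          apply combine
          have hS'S : 0 < S'/S := div_pos hS'pos hSpos
          suffices hσ : m * (lam i (xs i)/lam i (x i)) < M * (lam j (xs j)/lam j (x j)) by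
            rw [hqdef]
            dsimp only
            calc m * (lam i (xs i)/lam i (x i) * (S'/S))
                = (m * (lam i (xs i)/lam i (x i))) * (S'/S) := by ring
              _ < (M * (lam j (xs j)/lam j (x j))) * (S'/S) :=
                  mul_lt_mul_of_pos_right hσ hS'S
              _ = M * (lam j (xs j)/lam j (x j) * (S'/S)) := by ring
          have hg1 : (0:ℝ) < 1 + g := by linarith
          by_cases hbig : Real.exp (η/2) ≤ M
          · -- large upper margin
            have hρi : 1 + θ ≤ x i / xs i := by
              have h6 := hnear.1
              rw [hexpθ] at hbig
              linarith only [h6, hbig, hτθ]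
            have hxi : (1+θ)*xs i ≤ x i := (le_div_iff₀ (hxspos i)).1 hρi
            have hgapi : xs i * lam i (xs i) + g ≤ x i * lam i (x i) :=
              hgap i (x i) (hxIcc i) hxi
            have hσi : lam i (xs i)/lam i (x i) ≤ (x i/xs i) / (1+g) := by
              rw [div_le_div_iff₀ (hspos i) hg1, div_mul_eq_mul_div,
                le_div_iff₀ (hxspos i)]
              have b1 : xs i * lam i (xs i) ≤ 1 :=
                mul_le_one₀ (hxs1 i) (hsspos i).le (hssb i).2
              have b2 : 0 ≤ (1 - xs i * lam i (xs i)) * g :=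
                mul_nonneg (by linarith only [b1]) hgpos.le
              linarith only [hgapi, b2]
            have hσj : m / (1+g) < lam j (xs j)/lam j (x j) := by
              by_cases hxj : x j ≤ xs j
              · have h7 := hdown j hxj
                have h8 : m ≤ x j / xs j := hj₀' j
                have h9 : m / (1+g) < m := by
                  rw [div_lt_iff₀ hg1]
                  have c := mul_pos hm0 hgpos
                  linarith only [c]
                linarith only [h7, h8, h9]
              · push_neg at hxj
                have hρjub : x j / xs j < m + τ := hnear.2
                have hxd : x j - xs j < τ := by
                  have h10 : x j < (m+τ) * xs j := (div_lt_iff₀ (hxspos j)).1 hρjub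
                  have b1 : m * xs j ≤ 1 * xs j :=
                    mul_le_mul_of_nonneg_right hm1 (hxspos j).le
                  have b2 : τ * xs j ≤ τ * 1 :=
                    mul_le_mul_of_nonneg_left (hxs1 j) hτpos.le
                  linarith only [h10, b1, b2]
                have hclose : |lam j (x j) - lam j (xs j)| < ω := by
                  apply hδ j (x j) (hxIcc j) (xs j) (hxsIcc j)
                  rw [abs_lt]
                  constructor
                  · linarith only [hxj, hδpos j]
                  · linarith only [hxd, hτδ j]
                have hss_lb : lam j (x j) - ω < lam j (xs j) := by
                  have hc := abs_lt.1 hclose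
                  linarith only [hc.2]
                rw [div_lt_div_iff₀ hg1 (hspos j)]
                have p1 : (lam j (x j) - ω) * (1+g) < lam j (xs j) * (1+g) :=
                  mul_lt_mul_of_pos_right hss_lb hg1
                have q3 : lmin*g ≤ lam j (x j) * g :=
                  mul_le_mul_of_nonneg_right (hsb j).1 hgpos.le
                have q4 : m * lam j (x j) ≤ 1 * lam j (x j) :=
                  mul_le_mul_of_nonneg_right hm1 (hspos j).le
                have q5 : 0 ≤ lmin * g := mul_nonneg hlmin.le hgpos.le
                linarith only [p1, hωg2, q3, q4, q5]
            have h12 := mul_le_mul_of_nonneg_left hσi hm0.le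
            have h13 : (x i/xs i)/(1+g) ≤ M/(1+g) := by
              rw [div_le_div_iff₀ hg1 hg1]
              exact mul_le_mul_of_nonneg_right hρiM hg1.le
            have h13' := mul_le_mul_of_nonneg_left h13 hm0.le
            have h14 : M * (m/(1+g)) < M * (lam j (xs j)/lam j (x j)) :=
              mul_lt_mul_of_pos_left hσj hM0
            have hbr : m * (M/(1+g)) = M * (m/(1+g)) := by ring
            linarith only [h12, h13', h14, hbr]
          · -- large lower margin
            push_neg at hbig
            have hg'1 : (0:ℝ) < 1 - g' := by linarith only [hg'half]
            have hm' : m < 1 - 2*θ' := by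
              have h9 : Real.exp η * m < M := by
                rw [lt_div_iff₀ hm0] at hMm
                linarith only [hMm]
              have h10 : m * Real.exp η < Real.exp (η/2) := by
                linarith only [h9, hbig]
              have h11 : m < Real.exp (η/2) / Real.exp η :=
                (lt_div_iff₀ (Real.exp_pos η)).2 h10
              have h12 : Real.exp (η/2) / Real.exp η = Real.exp (-(η/2)) := by
                rw [← Real.exp_sub]
                congr 1
                ring
              rw [h12, hexpθ'] at h11
              exact h11
            have hρj : x j / xs j ≤ 1-θ' := by
              have hb := hnear.2
              linarith only [hb, hτθ', hm']
            have hxj : x j ≤ (1-θ')*xs j := (div_le_iff₀ (hxspos j)).1 hρj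
            have hgapj : x j * lam j (x j) ≤ xs j * lam j (xs j) - g' :=
              hgap' j (x j) (hxIcc j) hxj
            have hσj : (x j/xs j) / (1-g') ≤ lam j (xs j)/lam j (x j) := by
              rw [div_le_div_iff₀ hg'1 (hspos j), div_mul_eq_mul_div,
                div_le_iff₀ (hxspos j)]
              have b1 : xs j * lam j (xs j) ≤ 1 :=
                mul_le_one₀ (hxs1 j) (hsspos j).le (hssb j).2
              have b2 : 0 ≤ (1 - xs j * lam j (xs j)) * g' :=
                mul_nonneg (by linarith only [b1]) hg'pos.le
              linarith only [hgapj, b2]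
            have h13 : m/(1-g') ≤ (x j/xs j)/(1-g') := by
              rw [div_le_div_iff₀ hg'1 hg'1]
              exact mul_le_mul_of_nonneg_right hρjm hg'1.le
            have h14 := mul_le_mul_of_nonneg_left (le_trans h13 hσj) hM0.le
            -- h14 : M * (m/(1-g')) ≤ M * σ j
            by_cases hxi : xs i ≤ x i
            · have h16 := hup i hxi
              have h17 : m * (lam i (xs i)/lam i (x i)) ≤ m * M :=
                mul_le_mul_of_nonneg_left (le_trans h16 (hi₀' i)) hm0.le
              have h18 : m * M < m * (M / (1-g')) := by
                have c1 : M * (1-g') < M := by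
                  have d := mul_pos hM0 hg'pos
                  linarith only [d]
                have c2 : M < M/(1-g') := by
                  rw [lt_div_iff₀ hg'1]
                  exact c1
                exact mul_lt_mul_of_pos_left c2 hm0
              have hbr : m * (M/(1-g')) = M * (m/(1-g')) := by ring
              linarith only [h14, h17, h18, hbr]
            · push_neg at hxi
              have hρilb : M - τ < x i / xs i := hnear.1
              have hxd : xs i - x i < τ := by
                have h19 : (M - τ) * xs i < x i := (lt_div_iff₀ (hxspos i)).1 hρilb
                have b1 : 0 ≤ (M - 1) * xs i :=
                  mul_nonneg (by linarith only [hM1]) (hxspos i).le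
                have b2 : τ * xs i ≤ τ * 1 :=
                  mul_le_mul_of_nonneg_left (hxs1 i) hτpos.le
                linarith only [h19, b1, b2]
              have hclose : |lam i (x i) - lam i (xs i)| < ω := by
                apply hδ i (x i) (hxIcc i) (xs i) (hxsIcc i)
                rw [abs_lt]
                constructor
                · linarith only [hxd, hτδ i]
                · linarith only [hxi, hδpos i]
              have hss_ub : lam i (xs i) < lam i (x i) + ω := by
                have hc := abs_lt.1 hclose
                linarith only [hc.1]
              have h19 : lam i (xs i)/lam i (x i) < M/(1-g') := by
                rw [div_lt_div_iff₀ (hspos i) hg'1]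
                have p1 : lam i (xs i) * (1-g') < (lam i (x i) + ω) * (1-g') :=
                  mul_lt_mul_of_pos_right hss_ub hg'1
                have q3 : lmin * g' ≤ lam i (x i) * g' :=
                  mul_le_mul_of_nonneg_right (hsb i).1 hg'pos.le
                have q4 : 1 * lam i (x i) ≤ M * lam i (x i) :=
                  mul_le_mul_of_nonneg_right hM1 (hspos i).le
                have q5 : 0 ≤ ω * g' := mul_nonneg hωpos.le hg'pos.le
                have q6 : 0 < lam i (x i) * g' := mul_pos (hspos i) hg'pos
                linarith only [p1, hωg'2, q3, q4, q5, q6]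
              have h20 : m * (lam i (xs i)/lam i (x i)) < m * (M/(1-g')) :=
                mul_lt_mul_of_pos_left h19 hm0
              have hbr : m * (M/(1-g')) = M * (m/(1-g')) := by ring
              linarith only [h14, h20, hbr]
        · -- separated pair: the (1-ε) part dominates
          push_neg at hnear
          have hfar : lmin^4 * τ ≤ M * (x j/xs j) - m * (x i/xs i) := by
            have hpow1 : lmin^4 ≤ 1 := pow_le_one₀ hlmin.le hl1
            by_cases hc1 : M - τ < x i / xs i
            · have h20 := hnear hc1
              have a1 : M * (m + τ) ≤ M * (x j/xs j) :=
                mul_le_mul_of_nonneg_left h20 hM0.le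
              have a2 : m * (x i/xs i) ≤ m * M :=
                mul_le_mul_of_nonneg_left hρiM hm0.le
              have a3 : 0 ≤ (M - 1) * τ := mul_nonneg (by linarith only [hM1]) hτpos.le
              have a4 : 0 ≤ (1 - lmin^4) * τ :=
                mul_nonneg (by linarith only [hpow1]) hτpos.le
              linarith only [a1, a2, a3, a4]
            · push_neg at hc1
              have a1 : m * (x i/xs i) ≤ m * (M - τ) :=
                mul_le_mul_of_nonneg_left hc1 hm0.le
              have a2 : M * m ≤ M * (x j/xs j) :=
                mul_le_mul_of_nonneg_left hρjm hM0.le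
              have a3 : 0 ≤ (m - lmin^4) * τ :=
                mul_nonneg (by linarith only [hcase]) hτpos.le
              linarith only [a1, a2, a3]
          have hq20 : -(lmin^2)⁻¹ ≤ M * q j - m * q i := by
            have h21 : m * q i ≤ 1 * (lmin^2)⁻¹ :=
              mul_le_mul hm1 (hqub i) (hq0 i).le zero_le_one
            have h22 : 0 < M * q j := mul_pos hM0 (hq0 j)
            linarith only [h21, h22]
          have p1 : (1-ε) * (lmin^4*τ) ≤ (1-ε) * (M*(x j/xs j) - m*(x i/xs i)) :=
            mul_le_mul_of_nonneg_left hfar (by linarith)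
          have p2 : 2⁻¹ * (lmin^4*τ) ≤ (1-ε) * (lmin^4*τ) := by
            apply mul_le_mul_of_nonneg_right (by linarith)
            positivity
          have p3 : ε * (-(lmin^2)⁻¹) ≤ ε * (M*q j - m*q i) :=
            mul_le_mul_of_nonneg_left hq20 hε.le
          linarith only [p1, p2, p3, hεA]
    exact dHE_lt_of_key hn0 R x xs hRpos hxpos hxspos i₀ j₀ hi₀' hj₀' key
end

section
/- Under (A1)-(A3), for every η > 0 there exist ε_0 ∈ (0,1) and C_η > 0 such that for all 0 < ε < ε_0 and all x ∈ ri Σ with d_H(x, x*) ≥ η: e^{d_H}(R_ε(x), x*) < (1 - C_η ε) e^{d_H}(x, x*), and hence d_H(R_ε(x), x*) < d_H(x, x*) - C_η ε. -/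
open Finset

/-- Exponentiated Hilbert projective metric on the interior of the simplex. -/
noncomputable def eDH {n : ℕ} (x y : Fin n → ℝ) : ℝ :=
  (⨆ i, x i / y i) / (⨅ j, x j / y j)

section AuxDefs
set_option linter.unusedSectionVars false
variable {n : ℕ}

noncomputable def auxr (xs x : Fin n → ℝ) (i : Fin n) : ℝ := x i / xs i

noncomputable def auxp (lam : Fin n → ℝ → ℝ) (xs x : Fin n → ℝ) (i : Fin n) : ℝ :=
  (lam i (x i))⁻¹ / (∑ ℓ, (lam ℓ (x ℓ))⁻¹) / xs i

variable [NeZero n]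

noncomputable def auxM (xs x : Fin n → ℝ) : ℝ := univ.sup' univ_nonempty (auxr xs x)
noncomputable def auxm (xs x : Fin n → ℝ) : ℝ := univ.inf' univ_nonempty (auxr xs x)

noncomputable def auxPhi (lam : Fin n → ℝ → ℝ) (xs x : Fin n → ℝ) : ℝ :=
  univ.inf' univ_nonempty (fun ij : Fin n × Fin n =>
    max (auxM xs x * auxr xs x ij.2 - auxm xs x * auxr xs x ij.1)
        (auxM xs x * auxp lam xs x ij.2 - auxm xs x * auxp lam xs x ij.1))

def auxK (xs : Fin n → ℝ) (δ η : ℝ) : Set (Fin n → ℝ) :=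
  {x | (∀ i, δ * xs i ≤ x i) ∧ (∑ i, x i) = 1 ∧
    ∃ i j, Real.exp η * (x j / xs j) ≤ x i / xs i}

lemma mem_Icc_of_simplex (x : Fin n → ℝ) (hpos : ∀ i, 0 ≤ x i) (hsum : ∑ i, x i = 1)
    (i : Fin n) : x i ∈ Set.Icc (0:ℝ) 1 := by
  refine ⟨hpos i, ?_⟩
  calc x i ≤ ∑ j, x j := Finset.single_le_sum (fun j _ => hpos j) (mem_univ i)
  _ = 1 := hsum

lemma lam_bounds (lam : Fin n → ℝ → ℝ)
    (hmap : ∀ i, ∀ r ∈ Set.Icc (0 : ℝ) 1, lam i r ∈ Set.Icc (0 : ℝ) 1)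
    (lmin : ℝ) (hlmin : 0 < lmin)
    (hge : ∀ i, ∀ r ∈ Set.Icc (0 : ℝ) 1, lmin ≤ lam i r)
    (x : Fin n → ℝ) (hx : ∀ i, x i ∈ Set.Icc (0:ℝ) 1) (i : Fin n) :
    lmin ≤ lam i (x i) ∧ lam i (x i) ≤ 1 ∧ 0 < lam i (x i) :=
  ⟨hge i _ (hx i), (hmap i _ (hx i)).2, lt_of_lt_of_le hlmin (hge i _ (hx i))⟩

lemma S_bounds (lam : Fin n → ℝ → ℝ)
    (hmap : ∀ i, ∀ r ∈ Set.Icc (0 : ℝ) 1, lam i r ∈ Set.Icc (0 : ℝ) 1)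
    (lmin : ℝ) (hlmin : 0 < lmin)
    (hge : ∀ i, ∀ r ∈ Set.Icc (0 : ℝ) 1, lmin ≤ lam i r)
    (x : Fin n → ℝ) (hx : ∀ i, x i ∈ Set.Icc (0:ℝ) 1) :
    (n:ℝ) ≤ (∑ ℓ, (lam ℓ (x ℓ))⁻¹) ∧ (∑ ℓ, (lam ℓ (x ℓ))⁻¹) ≤ (n:ℝ) * lmin⁻¹ ∧
      (0:ℝ) < (∑ ℓ, (lam ℓ (x ℓ))⁻¹) := by
  have h1 : ∀ ℓ, (1:ℝ) ≤ (lam ℓ (x ℓ))⁻¹ := by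
    intro ℓ
    obtain ⟨ha, hb, hc⟩ := lam_bounds lam hmap lmin hlmin hge x hx ℓ
    exact one_le_inv_iff₀.2 ⟨hc, hb⟩
  have h2 : ∀ ℓ, (lam ℓ (x ℓ))⁻¹ ≤ lmin⁻¹ := by
    intro ℓ
    obtain ⟨ha, hb, hc⟩ := lam_bounds lam hmap lmin hlmin hge x hx ℓ
    exact inv_anti₀ hlmin ha
  have hn : (n:ℝ) = ∑ _ℓ : Fin n, (1:ℝ) := by simp
  refine ⟨?_, ?_, ?_⟩
  · rw [hn]; exact Finset.sum_le_sum (fun ℓ _ => h1 ℓ)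
  · calc (∑ ℓ, (lam ℓ (x ℓ))⁻¹) ≤ ∑ _ℓ : Fin n, lmin⁻¹ :=
        Finset.sum_le_sum (fun ℓ _ => h2 ℓ)
    _ = (n:ℝ) * lmin⁻¹ := by simp [mul_comm]
  · have hn0 : (0:ℝ) < (n:ℝ) := by exact_mod_cast NeZero.pos n
    calc (0:ℝ) < (n:ℝ) := hn0
    _ ≤ _ := by rw [hn]; exact Finset.sum_le_sum (fun ℓ _ => h1 ℓ)

lemma ratio_mem (lmin a c : ℝ) (hlmin : 0 < lmin) (ha : lmin ≤ a) (ha1 : a ≤ 1)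
    (hc : lmin ≤ c) (hc1 : c ≤ 1) : lmin ≤ a / c ∧ a / c ≤ lmin⁻¹ := by
  have hc0 : 0 < c := lt_of_lt_of_le hlmin hc
  constructor
  · rw [le_div_iff₀ hc0]; nlinarith
  · rw [div_le_iff₀ hc0, inv_mul_eq_div, le_div_iff₀ hlmin]; nlinarith

lemma ratio_mem' (lmin N u v : ℝ) (hlmin : 0 < lmin) (hl1 : lmin ≤ 1) (hN : 0 < N)
    (hu : N ≤ u) (hu1 : u ≤ N * lmin⁻¹) (hv : N ≤ v) (hv1 : v ≤ N * lmin⁻¹) :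
    lmin ≤ u / v ∧ u / v ≤ lmin⁻¹ := by
  have hv0 : 0 < v := lt_of_lt_of_le hN hv
  have hli : lmin * lmin⁻¹ = 1 := mul_inv_cancel₀ (ne_of_gt hlmin)
  constructor
  · rw [le_div_iff₀ hv0]; nlinarith
  · rw [div_le_iff₀ hv0, inv_mul_eq_div, le_div_iff₀ hlmin]; nlinarith

lemma auxp_eq (lam : Fin n → ℝ → ℝ)
    (lmin : ℝ) (hlmin : 0 < lmin)
    (hge : ∀ i, ∀ r ∈ Set.Icc (0 : ℝ) 1, lmin ≤ lam i r)
    (xs : Fin n → ℝ) (hxspos : ∀ i, 0 < xs i) (hxssum : ∑ i, xs i = 1)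
    (hfix : ∀ i, (lam i (xs i))⁻¹ / (∑ ℓ, (lam ℓ (xs ℓ))⁻¹) = xs i)
    (x : Fin n → ℝ) (hx : ∀ i, x i ∈ Set.Icc (0:ℝ) 1) (i : Fin n) :
    auxp lam xs x i
      = (lam i (xs i) / lam i (x i)) * ((∑ ℓ, (lam ℓ (xs ℓ))⁻¹) / (∑ ℓ, (lam ℓ (x ℓ))⁻¹)) := by
  have hxsIcc : ∀ j, xs j ∈ Set.Icc (0:ℝ) 1 :=
    mem_Icc_of_simplex xs (fun j => (hxspos j).le) hxssum
  have hlx : 0 < lam i (x i) := lt_of_lt_of_le hlmin (hge i _ (hx i))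
  have hS : 0 < ∑ ℓ, (lam ℓ (x ℓ))⁻¹ := by
    refine Finset.sum_pos (fun ℓ _ => ?_) ⟨i, mem_univ i⟩
    have : 0 < lam ℓ (x ℓ) := lt_of_lt_of_le hlmin (hge ℓ _ (hx ℓ))
    positivity
  have hSs : 0 < ∑ ℓ, (lam ℓ (xs ℓ))⁻¹ := by
    refine Finset.sum_pos (fun ℓ _ => ?_) ⟨i, mem_univ i⟩
    have : 0 < lam ℓ (xs ℓ) := lt_of_lt_of_le hlmin (hge ℓ _ (hxsIcc ℓ))
    positivity
  rw [auxp]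
  set a := lam i (xs i) with ha
  set c := lam i (x i) with hc
  set Ss := ∑ ℓ, (lam ℓ (xs ℓ))⁻¹ with hSsd
  set S := ∑ ℓ, (lam ℓ (x ℓ))⁻¹ with hSd
  have hfi : a⁻¹ / Ss = xs i := hfix i
  have ha0 : 0 < a := lt_of_lt_of_le hlmin (hge i _ (hxsIcc i))
  rw [← hfi]
  field_simp

lemma auxp_bounds (lam : Fin n → ℝ → ℝ)
    (hmap : ∀ i, ∀ r ∈ Set.Icc (0 : ℝ) 1, lam i r ∈ Set.Icc (0 : ℝ) 1)
    (lmin : ℝ) (hlmin : 0 < lmin)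
    (hge : ∀ i, ∀ r ∈ Set.Icc (0 : ℝ) 1, lmin ≤ lam i r)
    (xs : Fin n → ℝ) (hxspos : ∀ i, 0 < xs i) (hxssum : ∑ i, xs i = 1)
    (hfix : ∀ i, (lam i (xs i))⁻¹ / (∑ ℓ, (lam ℓ (xs ℓ))⁻¹) = xs i)
    (x : Fin n → ℝ) (hx : ∀ i, x i ∈ Set.Icc (0:ℝ) 1) (i : Fin n) :
    lmin^2 ≤ auxp lam xs x i ∧ auxp lam xs x i ≤ (lmin^2)⁻¹ := by
  have hxsIcc : ∀ j, xs j ∈ Set.Icc (0:ℝ) 1 :=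
    mem_Icc_of_simplex xs (fun j => (hxspos j).le) hxssum
  have hl1 : lmin ≤ 1 := le_trans (hge i _ (hx i)) (hmap i _ (hx i)).2
  obtain ⟨ha, ha1, ha0⟩ := lam_bounds lam hmap lmin hlmin hge xs hxsIcc i
  obtain ⟨hc, hc1, hc0⟩ := lam_bounds lam hmap lmin hlmin hge x hx i
  obtain ⟨hS1, hS2, hS0⟩ := S_bounds lam hmap lmin hlmin hge x hx
  obtain ⟨hT1, hT2, hT0⟩ := S_bounds lam hmap lmin hlmin hge xs hxsIcc
  have hn0 : (0:ℝ) < (n:ℝ) := by exact_mod_cast NeZero.pos n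
  obtain ⟨hq1, hq2⟩ := ratio_mem lmin _ _ hlmin ha ha1 hc hc1
  obtain ⟨ht1, ht2⟩ := ratio_mem' lmin (n:ℝ) _ _ hlmin hl1 hn0 hT1 hT2 hS1 hS2
  rw [auxp_eq lam lmin hlmin hge xs hxspos hxssum hfix x hx i]
  have h2 : (lmin^2)⁻¹ = lmin⁻¹ * lmin⁻¹ := by rw [sq, mul_inv]
  constructor
  · have := mul_le_mul hq1 ht1 (le_of_lt hlmin) (le_trans (le_of_lt hlmin) hq1)
    calc lmin^2 = lmin * lmin := sq lmin
    _ ≤ _ := mul_le_mul hq1 ht1 (le_of_lt hlmin) (le_trans (le_of_lt hlmin) hq1)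
  · rw [h2]
    refine mul_le_mul hq2 ht2 ?_ (by positivity)
    exact le_trans (le_of_lt hlmin) ht1

lemma sum_xs_mul_auxp (lam : Fin n → ℝ → ℝ)
    (lmin : ℝ) (hlmin : 0 < lmin)
    (hge : ∀ i, ∀ r ∈ Set.Icc (0 : ℝ) 1, lmin ≤ lam i r)
    (xs : Fin n → ℝ) (hxspos : ∀ i, 0 < xs i)
    (x : Fin n → ℝ) (hx : ∀ i, x i ∈ Set.Icc (0:ℝ) 1) :
    ∑ i, xs i * auxp lam xs x i = 1 := by
  have hS : 0 < ∑ ℓ, (lam ℓ (x ℓ))⁻¹ := by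
    have : Nonempty (Fin n) := ⟨⟨0, NeZero.pos n⟩⟩
    refine Finset.sum_pos (fun ℓ _ => ?_) univ_nonempty
    have : 0 < lam ℓ (x ℓ) := lt_of_lt_of_le hlmin (hge ℓ _ (hx ℓ))
    positivity
  have : ∀ i, xs i * auxp lam xs x i = (lam i (x i))⁻¹ / (∑ ℓ, (lam ℓ (x ℓ))⁻¹) := by
    intro i
    rw [auxp, mul_div_assoc']
    rw [mul_div_cancel_left₀ _ (ne_of_gt (hxspos i))]
  rw [Finset.sum_congr rfl (fun i _ => this i), ← Finset.sum_div]
  exact div_self (ne_of_gt hS)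

lemma sum_xs_mul_auxr (xs x : Fin n → ℝ) (hxspos : ∀ i, 0 < xs i) :
    ∑ i, xs i * auxr xs x i = ∑ i, x i := by
  refine Finset.sum_congr rfl (fun i _ => ?_)
  rw [auxr, mul_div_assoc', mul_div_cancel_left₀ _ (ne_of_gt (hxspos i))]

end AuxDefs

section Part2
set_option linter.unusedSectionVars false
set_option maxHeartbeats 1000000
variable {n : ℕ} [NeZero n]

lemma auxK_subset_Icc (xs : Fin n → ℝ) (hxspos : ∀ i, 0 < xs i) (δ η : ℝ) (hδ : 0 ≤ δ)
    (x : Fin n → ℝ) (hx : x ∈ auxK xs δ η) (i : Fin n) : x i ∈ Set.Icc (0:ℝ) 1 := by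
  obtain ⟨h1, h2, _⟩ := hx
  have h0 : ∀ j, 0 ≤ x j := fun j => le_trans (mul_nonneg hδ (hxspos j).le) (h1 j)
  exact mem_Icc_of_simplex x h0 h2 i

lemma auxK_isCompact (xs : Fin n → ℝ) (hxspos : ∀ i, 0 < xs i) (δ η : ℝ) (hδ : 0 ≤ δ) :
    IsCompact (auxK xs δ η) := by
  have hclosed : IsClosed (auxK xs δ η) := by
    have : auxK xs δ η = (⋂ i, {x : Fin n → ℝ | δ * xs i ≤ x i}) ∩
        ({x : Fin n → ℝ | (∑ i, x i) = 1} ∩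
          ⋃ i, ⋃ j, {x : Fin n → ℝ | Real.exp η * (x j / xs j) ≤ x i / xs i}) := by
      ext x
      simp only [auxK, Set.mem_setOf_eq, Set.mem_inter_iff, Set.mem_iInter, Set.mem_iUnion,
        Set.mem_setOf_eq]
    rw [this]
    refine IsClosed.inter (isClosed_iInter fun i => isClosed_le continuous_const
      (continuous_apply i)) (IsClosed.inter ?_ ?_)
    · exact isClosed_eq (continuous_finset_sum _ fun i _ => continuous_apply i) continuous_const
    · refine isClosed_iUnion_of_finite fun i => isClosed_iUnion_of_finite fun j => ?_
      exact isClosed_le (continuous_const.mul ((continuous_apply j).div_const _))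
        ((continuous_apply i).div_const _)
  have hbdd : Bornology.IsBounded (auxK xs δ η) := by
    refine (Metric.isBounded_closedBall (x := (0 : Fin n → ℝ)) (r := 1)).subset ?_
    intro x hx
    rw [Metric.mem_closedBall, dist_zero_right]
    rw [pi_norm_le_iff_of_nonneg zero_le_one]
    intro i
    obtain ⟨h0, h1⟩ := auxK_subset_Icc xs hxspos δ η hδ x hx i
    rw [Real.norm_eq_abs, abs_le]
    exact ⟨by linarith, h1⟩
  exact Metric.isCompact_of_isClosed_isBounded hclosed hbdd

lemma auxPhi_contOn (lam : Fin n → ℝ → ℝ)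
    (hmap : ∀ i, ∀ r ∈ Set.Icc (0 : ℝ) 1, lam i r ∈ Set.Icc (0 : ℝ) 1)
    (hcont : ∀ i, ContinuousOn (lam i) (Set.Icc 0 1))
    (lmin : ℝ) (hlmin : 0 < lmin)
    (hge : ∀ i, ∀ r ∈ Set.Icc (0 : ℝ) 1, lmin ≤ lam i r)
    (xs : Fin n → ℝ) (hxspos : ∀ i, 0 < xs i) (δ η : ℝ) (hδ : 0 ≤ δ) :
    ContinuousOn (auxPhi lam xs) (auxK xs δ η) := by
  set K := auxK xs δ η with hK
  have hIcc : ∀ x ∈ K, ∀ i, x i ∈ Set.Icc (0:ℝ) 1 := fun x hx i =>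
    auxK_subset_Icc xs hxspos δ η hδ x hx i
  have hc_r : ∀ i, Continuous (fun x : Fin n → ℝ => auxr xs x i) := fun i =>
    (continuous_apply i).div_const _
  have hc_lam : ∀ i, ContinuousOn (fun x : Fin n → ℝ => lam i (x i)) K := by
    intro i
    exact (hcont i).comp (continuous_apply i).continuousOn (fun x hx => hIcc x hx i)
  have hc_laminv : ∀ i, ContinuousOn (fun x : Fin n → ℝ => (lam i (x i))⁻¹) K := by
    intro i
    refine (hc_lam i).inv₀ (fun x hx => ?_)
    have := hge i _ (hIcc x hx i)
    exact ne_of_gt (lt_of_lt_of_le hlmin this)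
  have hc_S : ContinuousOn (fun x : Fin n → ℝ => ∑ ℓ, (lam ℓ (x ℓ))⁻¹) K :=
    continuousOn_finset_sum _ (fun ℓ _ => hc_laminv ℓ)
  have hS_ne : ∀ x ∈ K, (∑ ℓ, (lam ℓ (x ℓ))⁻¹) ≠ 0 := by
    intro x hx
    exact ne_of_gt (S_bounds lam hmap lmin hlmin hge x (hIcc x hx)).2.2
  have hc_p : ∀ i, ContinuousOn (fun x : Fin n → ℝ => auxp lam xs x i) K := by
    intro i
    exact (((hc_laminv i).div hc_S hS_ne).div_const _)
  have hc_M : ContinuousOn (auxM xs) K := by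
    have := ContinuousOn.finset_sup'_apply (t := K)
      (f := fun (i : Fin n) (x : Fin n → ℝ) => auxr xs x i)
      (univ_nonempty) (fun i _ => (hc_r i).continuousOn)
    exact this
  have hc_m : ContinuousOn (auxm xs) K := by
    have := ContinuousOn.finset_inf'_apply (t := K)
      (f := fun (i : Fin n) (x : Fin n → ℝ) => auxr xs x i)
      (univ_nonempty) (fun i _ => (hc_r i).continuousOn)
    exact this
  have : ContinuousOn (fun x => univ.inf' univ_nonempty
      (fun ij : Fin n × Fin n =>
        max (auxM xs x * auxr xs x ij.2 - auxm xs x * auxr xs x ij.1)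
            (auxM xs x * auxp lam xs x ij.2 - auxm xs x * auxp lam xs x ij.1))) K := by
    refine ContinuousOn.finset_inf'_apply univ_nonempty (fun ij _ => ?_)
    intro x hx
    exact (((hc_M x hx).mul ((hc_r ij.2).continuousOn x hx)).sub
        ((hc_m x hx).mul ((hc_r ij.1).continuousOn x hx))).max
      (((hc_M x hx).mul ((hc_p ij.2) x hx)).sub
        ((hc_m x hx).mul ((hc_p ij.1) x hx)))
  exact this

end Part2

section Part3
set_option linter.unusedSectionVars false
set_option maxHeartbeats 1000000
variable {n : ℕ} [NeZero n]

lemma auxPhi_pos (lam : Fin n → ℝ → ℝ)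
    (hmap : ∀ i, ∀ r ∈ Set.Icc (0 : ℝ) 1, lam i r ∈ Set.Icc (0 : ℝ) 1)
    (hmono : ∀ i, StrictMonoOn (fun r => r * lam i r) (Set.Icc 0 1))
    (lmin : ℝ) (hlmin : 0 < lmin)
    (hge : ∀ i, ∀ r ∈ Set.Icc (0 : ℝ) 1, lmin ≤ lam i r)
    (xs : Fin n → ℝ) (hxspos : ∀ i, 0 < xs i) (hxssum : ∑ i, xs i = 1)
    (hfix : ∀ i, (lam i (xs i))⁻¹ / (∑ ℓ, (lam ℓ (xs ℓ))⁻¹) = xs i)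
    (δ η : ℝ) (hδ : 0 < δ) (hη : 0 < η)
    (x : Fin n → ℝ) (hx : x ∈ auxK xs δ η) : 0 < auxPhi lam xs x := by
  obtain ⟨hx1, hx2, hx3⟩ := hx
  have hIcc : ∀ i, x i ∈ Set.Icc (0:ℝ) 1 :=
    auxK_subset_Icc xs hxspos δ η hδ.le x ⟨hx1, hx2, hx3⟩
  have hxsIcc : ∀ j, xs j ∈ Set.Icc (0:ℝ) 1 :=
    mem_Icc_of_simplex xs (fun j => (hxspos j).le) hxssum
  have hxpos : ∀ i, 0 < x i := fun i =>
    lt_of_lt_of_le (mul_pos hδ (hxspos i)) (hx1 i)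
  set M := auxM xs x with hM
  set m := auxm xs x with hm
  have hrpos : ∀ i, 0 < auxr xs x i := fun i => div_pos (hxpos i) (hxspos i)
  have hrM : ∀ i, auxr xs x i ≤ M := fun i => Finset.le_sup' _ (mem_univ i)
  have hmr : ∀ i, m ≤ auxr xs x i := fun i => Finset.inf'_le _ (mem_univ i)
  have hm0 : 0 < m := by
    obtain ⟨i, _, hi⟩ := Finset.exists_mem_eq_inf' (univ_nonempty) (auxr xs x)
    have h' : m = auxr xs x i := by rw [hm, auxm]; exact hi
    rw [h']; exact hrpos i
  have hM0 : 0 < M := lt_of_lt_of_le hm0 (le_trans (hmr ⟨0, NeZero.pos n⟩) (hrM _))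
  have hmM : m < M := by
    obtain ⟨i, j, hij⟩ := hx3
    have h1 : Real.exp η * m ≤ M := by
      calc Real.exp η * m ≤ Real.exp η * auxr xs x j := by
            have := Real.exp_pos η
            exact mul_le_mul_of_nonneg_left (hmr j) (by positivity)
      _ ≤ auxr xs x i := hij
      _ ≤ M := hrM i
    have h2 : 1 < Real.exp η := by
      have := Real.add_one_le_exp η; linarith
    nlinarith
  -- m ≤ 1 ≤ M
  have hsum1 : ∑ i, xs i * auxr xs x i = 1 := by
    rw [sum_xs_mul_auxr xs x hxspos, hx2]
  have hm1 : m ≤ 1 := by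
    have : ∑ i, xs i * m ≤ ∑ i, xs i * auxr xs x i :=
      Finset.sum_le_sum (fun i _ => mul_le_mul_of_nonneg_left (hmr i) (hxspos i).le)
    rw [hsum1, ← Finset.sum_mul, hxssum, one_mul] at this
    exact this
  have hM1 : 1 ≤ M := by
    have : ∑ i, xs i * auxr xs x i ≤ ∑ i, xs i * M :=
      Finset.sum_le_sum (fun i _ => mul_le_mul_of_nonneg_left (hrM i) (hxspos i).le)
    rw [hsum1, ← Finset.sum_mul, hxssum, one_mul] at this
    exact this
  -- lam facts
  have hlamx : ∀ k, 0 < lam k (x k) := fun k =>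
    lt_of_lt_of_le hlmin (hge k _ (hIcc k))
  have hlamxs : ∀ k, 0 < lam k (xs k) := fun k =>
    lt_of_lt_of_le hlmin (hge k _ (hxsIcc k))
  -- q bounds
  have hq_le : ∀ k, auxr xs x k = M → lam k (xs k) / lam k (x k) ≤ M ∧
      (1 < M → lam k (xs k) / lam k (x k) < M) := by
    intro k hk
    have hxk : xs k ≤ x k := by
      have h1 : 1 ≤ x k / xs k := by rw [show x k / xs k = auxr xs x k from rfl, hk]; exact hM1
      rw [le_div_iff₀ (hxspos k), one_mul] at h1; exact h1
    rcases eq_or_lt_of_le hxk with heq | hlt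
    · constructor
      · rw [← heq, div_self (ne_of_gt (hlamxs k))]; exact hM1
      · intro h1M
        rw [← heq, div_self (ne_of_gt (hlamxs k))]; exact h1M
    · have hmono' := hmono k (hxsIcc k) (hIcc k) hlt
      simp only at hmono'
      have : lam k (xs k) / lam k (x k) < x k / xs k := by
        rw [div_lt_div_iff₀ (hlamx k) (hxspos k)]
        nlinarith
      have h2 : lam k (xs k) / lam k (x k) < M := by
        rw [show x k / xs k = auxr xs x k from rfl, hk] at this; exact this
      exact ⟨h2.le, fun _ => h2⟩
  have hq_ge : ∀ k, auxr xs x k = m → m ≤ lam k (xs k) / lam k (x k) ∧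
      (m < 1 → m < lam k (xs k) / lam k (x k)) := by
    intro k hk
    have hxk : x k ≤ xs k := by
      have h1 : x k / xs k ≤ 1 := by rw [show x k / xs k = auxr xs x k from rfl, hk]; exact hm1
      rw [div_le_one (hxspos k)] at h1; exact h1
    rcases eq_or_lt_of_le hxk with heq | hlt
    · constructor
      · rw [heq, div_self (ne_of_gt (hlamxs k))]; exact hm1
      · intro h1m
        rw [heq, div_self (ne_of_gt (hlamxs k))]; exact h1m
    · have hmono' := hmono k (hIcc k) (hxsIcc k) hlt
      simp only at hmono'
      have : x k / xs k < lam k (xs k) / lam k (x k) := by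
        rw [div_lt_div_iff₀ (hxspos k) (hlamx k)]
        nlinarith
      have h2 : m < lam k (xs k) / lam k (x k) := by
        rw [show x k / xs k = auxr xs x k from rfl, hk] at this; exact this
      exact ⟨h2.le, fun _ => h2⟩
  -- main: each pair positive
  rw [auxPhi, Finset.lt_inf'_iff]
  rintro ⟨i, j⟩ -
  simp only
  have hh : 0 ≤ M * auxr xs x j - m * auxr xs x i := by
    have h1 : M * m ≤ M * auxr xs x j := mul_le_mul_of_nonneg_left (hmr j) hM0.le
    have h2 : m * auxr xs x i ≤ m * M := mul_le_mul_of_nonneg_left (hrM i) hm0.le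
    nlinarith
  rcases eq_or_lt_of_le hh with heq | hlt
  · -- extreme pair: use strict monotonicity
    have hrj : auxr xs x j = m := by
      have h1 : M * m ≤ M * auxr xs x j := mul_le_mul_of_nonneg_left (hmr j) hM0.le
      have h2 : m * auxr xs x i ≤ m * M := mul_le_mul_of_nonneg_left (hrM i) hm0.le
      have h3 : M * auxr xs x j = M * m := by nlinarith
      have := mul_left_cancel₀ (ne_of_gt hM0) h3
      linarith
    have hri : auxr xs x i = M := by
      have h1 : M * m ≤ M * auxr xs x j := mul_le_mul_of_nonneg_left (hmr j) hM0.le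
      have h2 : m * auxr xs x i ≤ m * M := mul_le_mul_of_nonneg_left (hrM i) hm0.le
      have h3 : m * auxr xs x i = m * M := by nlinarith
      have := mul_left_cancel₀ (ne_of_gt hm0) h3
      linarith [this]
    refine lt_max_of_lt_right ?_
    -- rewrite p via auxp_eq
    have hpi := auxp_eq lam lmin hlmin hge xs hxspos hxssum hfix x hIcc i
    have hpj := auxp_eq lam lmin hlmin hge xs hxspos hxssum hfix x hIcc j
    set T := (∑ ℓ, (lam ℓ (xs ℓ))⁻¹) / (∑ ℓ, (lam ℓ (x ℓ))⁻¹) with hT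
    have hT0 : 0 < T := by
      apply div_pos
      · exact Finset.sum_pos (fun ℓ _ => by have := hlamxs ℓ; positivity) univ_nonempty
      · exact Finset.sum_pos (fun ℓ _ => by have := hlamx ℓ; positivity) univ_nonempty
    set qi := lam i (xs i) / lam i (x i) with hqi
    set qj := lam j (xs j) / lam j (x j) with hqj
    have key : 0 < M * qj - m * qi := by
      obtain ⟨hqile, hqilt⟩ := hq_le i hri
      obtain ⟨hqjge, hqjgt⟩ := hq_ge j hrj
      rcases lt_or_ge 1 M with h1M | hM1'
      · have := hqilt h1M
        nlinarith
      · have hm1' : m < 1 := by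
          have : M ≤ 1 := hM1'
          nlinarith
        have := hqjgt hm1'
        nlinarith
    have : M * auxp lam xs x j - m * auxp lam xs x i = (M * qj - m * qi) * T := by
      rw [hpi, hpj]; ring
    rw [this]
    exact mul_pos key hT0
  · exact lt_max_of_lt_left hlt

end Part3

set_option maxHeartbeats 2000000 in
/-- Under (A1)–(A3), with `x*` the fixed point of `P`, for every `η > 0` there
exist `ε₀ ∈ (0,1)` and `C_η > 0` such that for `0 < ε < ε₀` and `x ∈ ri Σ` with
`d_H(x,x*) ≥ η`:
`e^{d_H}(R_ε(x), x*) < (1 - C_η ε) e^{d_H}(x, x*)` and hence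
`d_H(R_ε(x), x*) < d_H(x, x*) - C_η ε`. -/
theorem stmt17 (n : ℕ) (hn : 2 ≤ n) (lam : Fin n → ℝ → ℝ)
    (hmap : ∀ i, ∀ r ∈ Set.Icc (0 : ℝ) 1, lam i r ∈ Set.Icc (0 : ℝ) 1)
    (hcont : ∀ i, ContinuousOn (lam i) (Set.Icc 0 1))
    (hmono : ∀ i, StrictMonoOn (fun r => r * lam i r) (Set.Icc 0 1))
    (lmin : ℝ) (hlmin : 0 < lmin)
    (hge : ∀ i, ∀ r ∈ Set.Icc (0 : ℝ) 1, lmin ≤ lam i r)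
    (xs : Fin n → ℝ) (hxspos : ∀ i, 0 < xs i) (hxssum : ∑ i, xs i = 1)
    (hfix : ∀ i, (lam i (xs i))⁻¹ / (∑ ℓ, (lam ℓ (xs ℓ))⁻¹) = xs i) :
    ∀ η : ℝ, 0 < η → ∃ ε₀ ∈ Set.Ioo (0 : ℝ) 1, ∃ Cη : ℝ, 0 < Cη ∧
      ∀ ε : ℝ, 0 < ε → ε < ε₀ →
      ∀ x : Fin n → ℝ, (∀ i, 0 < x i) → ∑ i, x i = 1 →
        η ≤ Real.log (eDH x xs) →
        (eDH (fun i => (1 - ε) * x i +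
            ε * ((lam i (x i))⁻¹ / (∑ ℓ, (lam ℓ (x ℓ))⁻¹))) xs
          < (1 - Cη * ε) * eDH x xs) ∧
        (Real.log (eDH (fun i => (1 - ε) * x i +
            ε * ((lam i (x i))⁻¹ / (∑ ℓ, (lam ℓ (x ℓ))⁻¹))) xs)
          < Real.log (eDH x xs) - Cη * ε) := by
  intro η hη
  haveI : NeZero n := ⟨by omega⟩
  have hxsIcc : ∀ j, xs j ∈ Set.Icc (0:ℝ) 1 :=
    mem_Icc_of_simplex xs (fun j => (hxspos j).le) hxssum
  have hl1 : lmin ≤ 1 := by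
    have i0 : Fin n := ⟨0, by omega⟩
    exact le_trans (hge i0 _ (hxsIcc i0)) (hmap i0 _ (hxsIcc i0)).2
  set δ : ℝ := lmin^4/2 with hδdef
  have hδ0 : 0 < δ := by rw [hδdef]; positivity
  -- constant from compactness
  obtain ⟨c, hc0, hcK⟩ : ∃ c, 0 < c ∧ ∀ z ∈ auxK xs δ η, c ≤ auxPhi lam xs z := by
    by_cases hKne : (auxK xs δ η).Nonempty
    · obtain ⟨z₀, hz₀, hminOn⟩ := (auxK_isCompact xs hxspos δ η hδ0.le).exists_isMinOn hKne
        (auxPhi_contOn lam hmap hcont lmin hlmin hge xs hxspos δ η hδ0.le)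
      exact ⟨auxPhi lam xs z₀,
        auxPhi_pos lam hmap hmono lmin hlmin hge xs hxspos hxssum hfix δ η hδ0 hη z₀ hz₀,
        fun z hz => hminOn hz⟩
    · exact ⟨1, one_pos, fun z hz => absurd ⟨z, hz⟩ hKne⟩
  set L : ℝ := (lmin^2)⁻¹ with hLdef
  have hL0 : 0 < L := by rw [hLdef]; positivity
  have hLl : L * lmin^2 = 1 := by rw [hLdef]; field_simp
  have hxsinf_pos : 0 < univ.inf' univ_nonempty xs := by
    obtain ⟨i, _, hi⟩ := Finset.exists_mem_eq_inf' (univ_nonempty) xs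
    rw [hi]; exact hxspos i
  set K₀ : ℝ := (univ.inf' univ_nonempty xs)⁻¹ with hK₀def
  have hK₀0 : 0 < K₀ := by rw [hK₀def]; positivity
  set C₁ : ℝ := lmin^2/8 with hC₁def
  set C₂ : ℝ := c/(2*K₀) with hC₂def
  set Cη : ℝ := min C₁ C₂ with hCdef
  have hC0 : 0 < Cη := by
    rw [hCdef]; refine lt_min (by rw [hC₁def]; positivity) (by rw [hC₂def]; positivity)
  have hCC₁ : Cη ≤ C₁ := min_le_left _ _
  have hCC₂ : Cη ≤ C₂ := min_le_right _ _
  have hC18 : Cη ≤ 1/8 := by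
    refine le_trans hCC₁ ?_
    rw [hC₁def]; nlinarith
  set ε₀ : ℝ := c / (2*(c+L)) with hε₀def
  have hε₀0 : 0 < ε₀ := by rw [hε₀def]; positivity
  have hε₀half : ε₀ ≤ 1/2 := by
    rw [hε₀def, div_le_iff₀ (by positivity)]; nlinarith
  refine ⟨ε₀, ⟨hε₀0, by linarith⟩, Cη, hC0, ?_⟩
  intro ε hε hεlt x hxpos hxsum hηx
  have hε1 : ε < 1 := by linarith
  have hεhalf : ε < 1/2 := by linarith
  have hCε1 : Cη * ε < 1 := by
    have h5 := mul_le_mul_of_nonneg_left hε1.le hC0.le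
    rw [mul_one] at h5
    linarith only [h5, hC18]
  have hxIcc : ∀ i, x i ∈ Set.Icc (0:ℝ) 1 :=
    mem_Icc_of_simplex x (fun i => (hxpos i).le) hxsum
  -- basic quantities
  set M : ℝ := auxM xs x with hMdef
  set m : ℝ := auxm xs x with hmdef
  have hrpos : ∀ i, 0 < auxr xs x i := fun i => div_pos (hxpos i) (hxspos i)
  have hrM : ∀ i, auxr xs x i ≤ M := fun i => Finset.le_sup' _ (mem_univ i)
  have hmr : ∀ i, m ≤ auxr xs x i := fun i => Finset.inf'_le _ (mem_univ i)
  have hm0 : 0 < m := by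
    obtain ⟨i, _, hi⟩ := Finset.exists_mem_eq_inf' (univ_nonempty) (auxr xs x)
    have h' : m = auxr xs x i := by rw [hmdef, auxm]; exact hi
    rw [h']; exact hrpos i
  have hM0 : 0 < M := lt_of_lt_of_le hm0 (le_trans (hmr ⟨0, by omega⟩) (hrM _))
  have hsum1 : ∑ i, xs i * auxr xs x i = 1 := by
    rw [sum_xs_mul_auxr xs x hxspos, hxsum]
  have hm1 : m ≤ 1 := by
    have h2 : ∑ i, xs i * m ≤ ∑ i, xs i * auxr xs x i :=
      Finset.sum_le_sum (fun i _ => mul_le_mul_of_nonneg_left (hmr i) (hxspos i).le)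
    rw [hsum1, ← Finset.sum_mul, hxssum, one_mul] at h2
    exact h2
  have hM1 : 1 ≤ M := by
    have h2 : ∑ i, xs i * auxr xs x i ≤ ∑ i, xs i * M :=
      Finset.sum_le_sum (fun i _ => mul_le_mul_of_nonneg_left (hrM i) (hxspos i).le)
    rw [hsum1, ← Finset.sum_mul, hxssum, one_mul] at h2
    exact h2
  have hMK₀ : M ≤ K₀ := by
    refine Finset.sup'_le _ _ (fun k _ => ?_)
    have h1 : auxr xs x k ≤ (xs k)⁻¹ := by
      rw [auxr, div_le_iff₀ (hxspos k), inv_mul_cancel₀ (ne_of_gt (hxspos k))]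
      exact (hxIcc k).2
    refine le_trans h1 ?_
    rw [hK₀def]
    exact inv_anti₀ hxsinf_pos (Finset.inf'_le _ (mem_univ k))
  have heDHx : eDH x xs = M / m := by
    unfold eDH
    rw [← Finset.sup'_univ_eq_ciSup, ← Finset.inf'_univ_eq_ciInf]
    rfl
  have heDHx_pos : 0 < eDH x xs := by rw [heDHx]; positivity
  -- p bounds
  have hpb : ∀ k, lmin^2 ≤ auxp lam xs x k ∧ auxp lam xs x k ≤ L := by
    intro k
    obtain ⟨h1, h2⟩ := auxp_bounds lam hmap lmin hlmin hge xs hxspos hxssum hfix x hxIcc k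
    exact ⟨h1, by rw [hLdef]; exact h2⟩
  -- the iterate
  set y : Fin n → ℝ := fun i => (1 - ε) * x i +
      ε * ((lam i (x i))⁻¹ / (∑ ℓ, (lam ℓ (x ℓ))⁻¹)) with hy
  have hnew : ∀ k, auxr xs y k = (1-ε) * auxr xs x k + ε * auxp lam xs x k := by
    intro k
    simp only [hy, auxr, auxp]
    ring
  set Ny : ℝ := auxM xs y with hNydef
  set ny : ℝ := auxm xs y with hnydef
  have hNy_le : Ny ≤ (1-ε)*M + ε*L := by
    refine Finset.sup'_le _ _ (fun k _ => ?_)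
    rw [hnew k]
    exact add_le_add (mul_le_mul_of_nonneg_left (hrM k) (by linarith only [hε1]))
      (mul_le_mul_of_nonneg_left (hpb k).2 hε.le)
  have hny_ge : (1-ε)*m + ε*lmin^2 ≤ ny := by
    refine Finset.le_inf' _ _ (fun k _ => ?_)
    rw [hnew k]
    exact add_le_add (mul_le_mul_of_nonneg_left (hmr k) (by linarith only [hε1]))
      (mul_le_mul_of_nonneg_left (hpb k).1 hε.le)
  have hny0 : 0 < ny := by
    refine lt_of_lt_of_le ?_ hny_ge
    have v1 := mul_pos (show (0:ℝ) < 1-ε by linarith only [hε1]) hm0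
    have v2 := mul_pos hε (pow_pos hlmin 2)
    linarith only [v1, v2]
  have hnewr : ∀ k, m ≤ auxr xs y k → True := fun _ _ => trivial
  have hNyny : ny ≤ Ny := by
    refine le_trans (Finset.inf'_le _ (mem_univ ⟨0, by omega⟩)) (Finset.le_sup' _ (mem_univ _))
  have hNy0 : 0 < Ny := lt_of_lt_of_le hny0 hNyny
  have hysum : ∑ k, xs k * auxr xs y k = 1 := by
    rw [sum_xs_mul_auxr xs y hxspos]
    have hS : 0 < ∑ ℓ, (lam ℓ (x ℓ))⁻¹ :=
      (S_bounds lam hmap lmin hlmin hge x hxIcc).2.2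
    have hsP : ∑ i, ((lam i (x i))⁻¹ / (∑ ℓ, (lam ℓ (x ℓ))⁻¹)) = 1 := by
      rw [← Finset.sum_div]
      exact div_self (ne_of_gt hS)
    simp only [hy]
    rw [Finset.sum_add_distrib, ← Finset.mul_sum, ← Finset.mul_sum, hxsum, hsP]
    ring
  have hny1 : ny ≤ 1 := by
    have h2 : ∑ k, xs k * ny ≤ ∑ k, xs k * auxr xs y k :=
      Finset.sum_le_sum (fun k _ =>
        mul_le_mul_of_nonneg_left (Finset.inf'_le _ (mem_univ k)) (hxspos k).le)
    rw [hysum, ← Finset.sum_mul, hxssum, one_mul] at h2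
    exact h2
  have heDHy : eDH y xs = Ny / ny := by
    unfold eDH
    rw [← Finset.sup'_univ_eq_ciSup, ← Finset.inf'_univ_eq_ciInf]
    rfl
  -- main key inequality
  have hkey : Ny * m < (1 - Cη*ε) * M * ny := by
    by_cases hcase : m ≤ M * δ
    · -- crude bounds regime
      have hub : Ny * m ≤ ((1-ε)*M + ε*L) * m :=
        mul_le_mul_of_nonneg_right hNy_le hm0.le
      have hlb : (1 - Cη*ε) * M * ((1-ε)*m + ε*lmin^2) ≤ (1 - Cη*ε) * M * ny := by
        refine mul_le_mul_of_nonneg_left hny_ge ?_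
        have h9 : (0:ℝ) ≤ 1 - Cη*ε := by linarith
        exact mul_nonneg h9 hM0.le
      refine lt_of_le_of_lt hub (lt_of_lt_of_le ?_ hlb)
      have e1 : L * m ≤ M * lmin^2/2 := by
        have h2 : L * m ≤ L * (M * δ) := mul_le_mul_of_nonneg_left hcase hL0.le
        rw [hδdef] at h2
        have h3 : L * (M * (lmin^4/2)) = M * lmin^2/2 := by
          linear_combination (M * lmin^2/2) * hLl
        linarith only [h2, h3]
      have e2 : Cη*(1-ε)*M*m ≤ (lmin^2/8)*M := by
        have hC' : Cη ≤ lmin^2/8 := by rw [hC₁def] at hCC₁; exact hCC₁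
        have h4 : (1-ε)*m ≤ 1 := mul_le_one₀ (by linarith) hm0.le hm1
        calc Cη*(1-ε)*M*m = (Cη*M)*((1-ε)*m) := by ring
        _ ≤ (Cη*M)*1 := mul_le_mul_of_nonneg_left h4 (by positivity)
        _ = Cη*M := mul_one _
        _ ≤ (lmin^2/8)*M := mul_le_mul_of_nonneg_right hC' hM0.le
      have e3 : Cη*ε ≤ 1/8 := by
        have h5 := mul_le_mul_of_nonneg_left hε1.le hC0.le
        rw [mul_one] at h5
        linarith only [h5, hC18]
      have hMl2 : 0 < M * lmin^2 := by positivity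
      have hstep : L*m + Cη*(1-ε)*M*m < (1 - Cη*ε)*M*lmin^2 := by
        have h7 : (7:ℝ)/8*(M*lmin^2) ≤ (1-Cη*ε)*(M*lmin^2) :=
          mul_le_mul_of_nonneg_right (by linarith) hMl2.le
        linarith only [h7, e1, e2, hMl2]
      linarith only [mul_lt_mul_of_pos_left hstep hε]
    · -- compactness regime
      push_neg at hcase
      have hxK : x ∈ auxK xs δ η := by
        refine ⟨fun i => ?_, hxsum, ?_⟩
        · have hδm : δ ≤ m := by
            have h2' := mul_le_mul_of_nonneg_left hM1 hδ0.le
            rw [mul_one] at h2'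
            linarith only [h2', hcase]
          have h2 : δ ≤ x i / xs i := le_trans hδm (hmr i)
          rw [le_div_iff₀ (hxspos i)] at h2
          exact h2
        · obtain ⟨i₀, _, hi₀⟩ := Finset.exists_mem_eq_sup' (univ_nonempty) (auxr xs x)
          obtain ⟨j₀, _, hj₀⟩ := Finset.exists_mem_eq_inf' (univ_nonempty) (auxr xs x)
          have hMi : M = auxr xs x i₀ := by rw [hMdef, auxM]; exact hi₀
          have hmj : m = auxr xs x j₀ := by rw [hmdef, auxm]; exact hj₀
          refine ⟨i₀, j₀, ?_⟩
          have hexp : Real.exp η ≤ M / m := by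
            have := Real.exp_le_exp.2 hηx
            rw [Real.exp_log heDHx_pos] at this
            rw [heDHx] at this
            exact this
          have : Real.exp η * m ≤ M := (le_div_iff₀ hm0).1 hexp
          show Real.exp η * (x j₀ / xs j₀) ≤ x i₀ / xs i₀
          have hxj : x j₀ / xs j₀ = m := by rw [hmj]; rfl
          have hxi : x i₀ / xs i₀ = M := by rw [hMi]; rfl
          rw [hxj, hxi]
          exact this
      have hPhi : c ≤ auxPhi lam xs x := hcK x hxK
      obtain ⟨is, _, his⟩ := Finset.exists_mem_eq_sup' (univ_nonempty) (auxr xs y)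
      obtain ⟨js, _, hjs⟩ := Finset.exists_mem_eq_inf' (univ_nonempty) (auxr xs y)
      have hNyeq : Ny = auxr xs y is := by rw [hNydef, auxM]; exact his
      have hnyeq : ny = auxr xs y js := by rw [hnydef, auxm]; exact hjs
      have hpair : c ≤ max (M * auxr xs x js - m * auxr xs x is)
          (M * auxp lam xs x js - m * auxp lam xs x is) := by
        refine le_trans hPhi ?_
        have h2 : auxPhi lam xs x ≤ max
            (auxM xs x * auxr xs x (is, js).2 - auxm xs x * auxr xs x (is, js).1)
            (auxM xs x * auxp lam xs x (is, js).2 - auxm xs x * auxp lam xs x (is, js).1) := by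
          rw [auxPhi]
          exact Finset.inf'_le _ (mem_univ ((is, js) : Fin n × Fin n))
        exact h2
      have hh0 : 0 ≤ M * auxr xs x js - m * auxr xs x is := by
        have h1 : M * m ≤ M * auxr xs x js := mul_le_mul_of_nonneg_left (hmr js) hM0.le
        have h2 : m * auxr xs x is ≤ m * M := mul_le_mul_of_nonneg_left (hrM is) hm0.le
        linarith only [h1, h2]
      have hsL : -L ≤ M * auxp lam xs x js - m * auxp lam xs x is := by
        have h1 : 0 ≤ M * auxp lam xs x js := by
          have h2' := (hpb js).1
          exact mul_nonneg hM0.le (le_trans (by positivity) h2')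
        have h2 : m * auxp lam xs x is ≤ L := by
          have hle := (hpb is).2
          have h3 := (hpb is).1
          have hp0 : 0 ≤ auxp lam xs x is := le_trans (by positivity) h3
          calc m * auxp lam xs x is ≤ 1 * auxp lam xs x is :=
            mul_le_mul_of_nonneg_right hm1 hp0
          _ = auxp lam xs x is := one_mul _
          _ ≤ L := hle
        linarith only [h1, h2]
      have hDeq : M * ny - m * Ny = (1-ε) * (M * auxr xs x js - m * auxr xs x is)
          + ε * (M * auxp lam xs x js - m * auxp lam xs x is) := by
        rw [hNyeq, hnyeq, hnew is, hnew js]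
        ring
      have hD : c * ε ≤ M * ny - m * Ny := by
        rcases le_or_gt c (M * auxp lam xs x js - m * auxp lam xs x is) with hs | hs
        · rw [hDeq]
          have u1 := mul_le_mul_of_nonneg_left hs hε.le
          have u2 : 0 ≤ (1-ε) * (M * auxr xs x js - m * auxr xs x is) :=
            mul_nonneg (by linarith only [hε1]) hh0
          linarith only [u1, u2]
        · have hhc : c ≤ M * auxr xs x js - m * auxr xs x is := by
            rcases le_max_iff.1 hpair with h | h
            · exact h
            · linarith only [h, hs]
          have hε2 : ε * (2*(c+L)) < c := by
            rw [hε₀def] at hεlt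
            rw [← lt_div_iff₀ (by positivity)]
            exact hεlt
          rw [hDeq]
          have u1 : (1-ε)*c ≤ (1-ε) * (M * auxr xs x js - m * auxr xs x is) :=
            mul_le_mul_of_nonneg_left hhc (by linarith only [hε1])
          have u2 : ε*(-L) ≤ ε * (M * auxp lam xs x js - m * auxp lam xs x is) :=
            mul_le_mul_of_nonneg_left hsL hε.le
          have u3 : 0 ≤ ε*L := mul_nonneg hε.le hL0.le
          linarith only [u1, u2, u3, hε2]
      have hMny : M * ny ≤ K₀ := by
        have u4 := mul_le_mul_of_nonneg_left hny1 hM0.le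
        rw [mul_one] at u4
        linarith only [u4, hMK₀]
      have e4 : Cη * ε * (M * ny) ≤ c * ε / 2 := by
        have h1 : Cη * ε * (M * ny) ≤ C₂ * ε * K₀ := by
          calc Cη * ε * (M * ny) ≤ Cη * ε * K₀ :=
            mul_le_mul_of_nonneg_left hMny (by positivity)
          _ ≤ C₂ * ε * K₀ :=
            mul_le_mul_of_nonneg_right (mul_le_mul_of_nonneg_right hCC₂ hε.le) hK₀0.le
        have h2 : C₂ * ε * K₀ = c * ε / 2 := by
          rw [hC₂def]
          field_simp
        linarith only [h1, h2]
      linarith only [mul_pos hc0 hε, e4, hD]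
  -- conclude
  have hgoal1 : eDH y xs < (1 - Cη*ε) * eDH x xs := by
    rw [heDHy, heDHx, mul_div_assoc']
    rw [div_lt_div_iff₀ hny0 hm0]
    exact hkey
  have heDHy_pos : 0 < eDH y xs := by rw [heDHy]; positivity
  refine ⟨hgoal1, ?_⟩
  have hlog := Real.log_lt_log heDHy_pos hgoal1
  have h1C : (0:ℝ) < 1 - Cη*ε := by linarith only [hCε1]
  rw [Real.log_mul (ne_of_gt h1C) (ne_of_gt heDHx_pos)] at hlog
  have := Real.log_le_sub_one_of_pos h1C
  linarith only [hlog, this]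
end

section
/- Let x* ∈ ri Σ. There exists C > 0 (one may take C = 1/min_i x*_i) such that for all x ∈ ri Σ, all y ∈ Σ, and all ε ∈ [0,1): e^{d_H}((1-ε)x + εy, x*) ≤ e^{d_H}(x, x*)(1 + (ε/(1-ε)) C), and consequently d_H((1-ε)x + εy, x*) ≤ d_H(x, x*) + log(1 + Cε/(1-ε)). -/
open Finset

/-- For `x* ∈ ri Σ` the constant `C = 1/min_i x*_i > 0` satisfies: for all
`x ∈ ri Σ`, `y ∈ Σ` and `ε ∈ [0,1)`,
`e^{d_H}((1-ε)x + εy, x*) ≤ e^{d_H}(x, x*)(1 + (ε/(1-ε))C)` and consequently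
`d_H((1-ε)x + εy, x*) ≤ d_H(x, x*) + log(1 + Cε/(1-ε))`. -/
theorem stmt18 (n : ℕ) (hn : 2 ≤ n)
    (xs : Fin n → ℝ) (hxspos : ∀ i, 0 < xs i) (hxssum : ∑ i, xs i = 1) :
    0 < (⨅ i, xs i)⁻¹ ∧
    ∀ x : Fin n → ℝ, (∀ i, 0 < x i) → ∑ i, x i = 1 →
      ∀ y : Fin n → ℝ, (∀ i, 0 ≤ y i) → ∑ i, y i = 1 →
      ∀ ε : ℝ, 0 ≤ ε → ε < 1 →
        (eDH ((1 - ε) • x + ε • y) xs ≤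
          eDH x xs * (1 + (ε / (1 - ε)) * (⨅ i, xs i)⁻¹)) ∧
        (Real.log (eDH ((1 - ε) • x + ε • y) xs) ≤
          Real.log (eDH x xs) +
            Real.log (1 + (⨅ i, xs i)⁻¹ * ε / (1 - ε))) := by
  have hne : Nonempty (Fin n) := ⟨⟨0, by omega⟩⟩
  have hbddA : ∀ f : Fin n → ℝ, BddAbove (Set.range f) :=
    fun f => (Set.finite_range f).bddAbove
  have hbddB : ∀ f : Fin n → ℝ, BddBelow (Set.range f) :=
    fun f => (Set.finite_range f).bddBelow
  have hinfxs : 0 < ⨅ i, xs i := by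
    obtain ⟨i0, hi0⟩ := Finite.exists_min xs
    exact lt_of_lt_of_le (hxspos i0) (le_ciInf hi0)
  set C := (⨅ i, xs i)⁻¹ with hC
  have hCpos : 0 < C := inv_pos.mpr hinfxs
  refine ⟨hCpos, ?_⟩
  intro x hx hxsum y hy hysum ε hε hε1
  have h1ε : 0 < 1 - ε := by linarith
  set m := ⨅ j, x j / xs j with hm
  set M := ⨆ i, x i / xs i with hM
  have hmpos : 0 < m := by
    obtain ⟨i0, hi0⟩ := Finite.exists_min (fun j => x j / xs j)
    exact lt_of_lt_of_le (div_pos (hx i0) (hxspos i0)) (le_ciInf hi0)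
  have hM1 : 1 ≤ M := by
    obtain ⟨i, hi⟩ : ∃ i, xs i ≤ x i := by
      by_contra h
      push_neg at h
      have := Finset.sum_lt_sum_of_nonempty (univ_nonempty (α := Fin n))
        (fun i _ => h i)
      rw [hxsum, hxssum] at this
      exact lt_irrefl _ this
    have h1 : 1 ≤ x i / xs i := (one_le_div (hxspos i)).mpr hi
    exact le_trans h1 (le_ciSup (f := fun i => x i / xs i) (hbddA _) i)
  set z := (1 - ε) • x + ε • y with hz
  have hzval : ∀ i, z i / xs i = (1 - ε) * (x i / xs i) + ε * (y i / xs i) := by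
    intro i
    simp only [hz, Pi.add_apply, Pi.smul_apply, smul_eq_mul]
    ring
  have hyC : ∀ i, y i / xs i ≤ C := by
    intro i
    have hy1 : y i ≤ 1 := by
      rw [← hysum]
      exact Finset.single_le_sum (fun j _ => hy j) (mem_univ i)
    have hinfle : (⨅ i, xs i) ≤ xs i := ciInf_le (hbddB _) i
    calc y i / xs i ≤ 1 / (⨅ i, xs i) :=
          div_le_div₀ zero_le_one hy1 hinfxs hinfle
      _ = C := one_div _
  have hzsup : (⨆ i, z i / xs i) ≤ (1 - ε) * M + ε * C := by
    apply ciSup_le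
    intro i
    rw [hzval i]
    have h1 : x i / xs i ≤ M := le_ciSup (f := fun i => x i / xs i) (hbddA _) i
    have h2 := hyC i
    nlinarith [hε, h1ε.le]
  have hzinf : (1 - ε) * m ≤ ⨅ j, z j / xs j := by
    apply le_ciInf
    intro j
    rw [hzval j]
    have h1 : m ≤ x j / xs j := ciInf_le (hbddB _) j
    have h2 : 0 ≤ y j / xs j := div_nonneg (hy j) (hxspos j).le
    nlinarith [hε, h1ε.le]
  have hzinfpos : 0 < ⨅ j, z j / xs j := lt_of_lt_of_le (by positivity) hzinf
  have hnumnn : 0 ≤ (1 - ε) * M + ε * C := by nlinarith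
  have hstep : eDH z xs ≤ ((1 - ε) * M + ε * C) / ((1 - ε) * m) := by
    exact div_le_div₀ hnumnn hzsup (by positivity) hzinf
  have hedx : eDH x xs = M / m := rfl
  have harith : ((1 - ε) * M + ε * C) / ((1 - ε) * m) ≤
      M / m * (1 + (ε / (1 - ε)) * C) := by
    rw [div_le_iff₀ (by positivity)]
    have hq : M / m * (1 + ε / (1 - ε) * C) * ((1 - ε) * m) =
        M * (1 - ε) + M * ε * C := by
      field_simp
    rw [hq]
    nlinarith [mul_nonneg hε hCpos.le]
  have hmain : eDH z xs ≤ eDH x xs * (1 + (ε / (1 - ε)) * C) := by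
    rw [hedx]; exact le_trans hstep harith
  refine ⟨hmain, ?_⟩
  have hzsuppos : 0 < ⨆ i, z i / xs i := by
    obtain ⟨i0⟩ := hne
    have h1 : (⨅ j, z j / xs j) ≤ z i0 / xs i0 := ciInf_le (hbddB _) i0
    have h2 : z i0 / xs i0 ≤ ⨆ i, z i / xs i := le_ciSup (f := fun i => z i / xs i) (hbddA _) i0
    linarith
  have hedzpos : 0 < eDH z xs := div_pos hzsuppos hzinfpos
  have hedxpos : 0 < eDH x xs := by
    rw [hedx]; exact div_pos (lt_of_lt_of_le one_pos hM1) hmpos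
  have hfpos : 0 < 1 + (ε / (1 - ε)) * C := by positivity
  have hlog := Real.log_le_log hedzpos hmain
  rw [Real.log_mul (ne_of_gt hedxpos) (ne_of_gt hfpos)] at hlog
  have heq : 1 + (ε / (1 - ε)) * C = 1 + C * ε / (1 - ε) := by ring
  rw [heq] at hlog
  exact hlog
end
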